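/- arXiv:1505.02839 — 2 statements merged into one kernel-verified Lean document; each statement's English description precedes it below -/
import Mathlib

section
/- For r > 0 define the Young–Orlicz function Θ_r(u) := exp(|u|^r) − 1. Let 0 < q < p < ∞, let (X,d) be a compact metric space, and let ξ = ξ(x,ω) be a jointly measurable random field on X with almost surely continuous sample paths such that the Luxemburg norm ‖ sup_{x∈X} |ξ(x)| ‖_{Θ_p} is finite. Then there exist a scaling function g_{p,q} and a non-negative random variable τ with ‖τ‖_{Θ_q} = 1 such that, almost surely, Δ(ξ(·,ω),δ) ≤ τ(ω) · g_{p,q}(δ) for every δ ∈ [0, diam(X)]. (Here one uses that Θ_q is weaker than Θ_p for q < p, i.e., for every v > 0, lim_{u→∞} Θ_q(uv)/Θ_p(u) = 0.) -/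
open MeasureTheory Filter Set
open scoped ENNReal NNReal

/-- The modulus of continuity `Δ(f, δ)` of a function `f` on a metric space. -/
noncomputable def modCont {X : Type*} [MetricSpace X] (f : X → ℝ) (δ : ℝ) : ℝ :=
  sSup {r : ℝ | ∃ x y : X, dist x y ≤ δ ∧ r = |f x - f y|}

/-- An Orlicz (Young) function: even, convex, continuous, strictly increasing on `[0,∞)`,
vanishing at `0`, and tending to `∞` at `∞`. -/
structure IsOrliczFunction (Φ : ℝ → ℝ) : Prop where
  even : ∀ u, Φ (-u) = Φ u
  nonneg : ∀ u, 0 ≤ Φ u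
  convexOn : ConvexOn ℝ Set.univ Φ
  continuous : Continuous Φ
  strictMonoOn : StrictMonoOn Φ (Set.Ici 0)
  map_zero : Φ 0 = 0
  tendsto_atTop : Filter.Tendsto Φ Filter.atTop Filter.atTop

/-- The `Δ₂` condition: `limsup_{u→∞} Φ(2u)/Φ(u) < ∞`. -/
def OrliczDelta2 (Φ : ℝ → ℝ) : Prop :=
  ∃ C : ℝ, ∀ᶠ u in Filter.atTop, Φ (2 * u) ≤ C * Φ u

/-- The Luxemburg norm of a random variable `ζ` with respect to the Orlicz function `Φ`,
with value `∞` when `ζ` belongs to no ball of the Orlicz space. -/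
noncomputable def luxNorm {Ω : Type*} [MeasurableSpace Ω] (P : Measure Ω)
    (Φ : ℝ → ℝ) (ζ : Ω → ℝ) : ℝ≥0∞ :=
  sInf {c : ℝ≥0∞ | 0 < c ∧ c ≠ ∞ ∧
    ∫⁻ ω, ENNReal.ofReal (Φ (|ζ ω| / c.toReal)) ∂P ≤ 1}

/-- A scaling function on `[0, D]`: continuous, non-negative, nondecreasing, vanishing at `0`. -/
def IsScalingFunction (g : ℝ → ℝ) (D : ℝ) : Prop :=
  ContinuousOn g (Set.Icc 0 D) ∧ (∀ δ ∈ Set.Icc 0 D, 0 ≤ g δ) ∧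
    MonotoneOn g (Set.Icc 0 D) ∧ g 0 = 0

/-- `Ψ` is weaker than `Φ` (`Ψ << Φ`): for every `v > 0`, `Ψ(uv)/Φ(u) → 0` as `u → ∞`. -/
def OrliczWeaker (Ψ Φ : ℝ → ℝ) : Prop :=
  ∀ v : ℝ, 0 < v →
    Filter.Tendsto (fun u => Ψ (u * v) / Φ u) Filter.atTop (nhds 0)

/-- The exponential Young–Orlicz function `Θ_r(u) = exp(|u|^r) - 1`. -/
noncomputable def ThetaOrlicz (r : ℝ) (u : ℝ) : ℝ := Real.exp (|u| ^ r) - 1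

lemma theta_nonneg (r u : ℝ) : 0 ≤ ThetaOrlicz r u := by
  have : (1:ℝ) ≤ Real.exp (|u| ^ r) := Real.one_le_exp (Real.rpow_nonneg (abs_nonneg u) r)
  unfold ThetaOrlicz; linarith

lemma theta_mono {r a b : ℝ} (hr : 0 ≤ r) (ha : 0 ≤ a) (hab : a ≤ b) :
    ThetaOrlicz r a ≤ ThetaOrlicz r b := by
  have h1 : |a| ≤ |b| := by rw [abs_of_nonneg ha, abs_of_nonneg (ha.trans hab)]; exact hab
  exact sub_le_sub_right (Real.exp_le_exp.2 (Real.rpow_le_rpow (abs_nonneg a) h1 hr)) 1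

lemma theta_add_one (r u : ℝ) : ThetaOrlicz r u + 1 = Real.exp (|u| ^ r) := by
  simp [ThetaOrlicz]

lemma young_aux {p q : ℝ} (hq : 0 < q) (hqp : q < p) {A B : ℝ} (hA : 0 < A) (hB : 0 < B) :
    ∃ C : ℝ, 0 ≤ C ∧ ∀ t : ℝ, 0 ≤ t → (A * (1 + 2*t)) ^ q ≤ B * t ^ p + C := by
  have hpq : 0 < p - q := by linarith
  set T0 : ℝ := ((3*A) ^ q / B) ^ (p - q)⁻¹ with hT0
  set T : ℝ := max 1 T0 with hT
  have hT1 : (1:ℝ) ≤ T := le_max_left _ _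
  have hTpos : 0 < T := lt_of_lt_of_le one_pos hT1
  have h3A : (0:ℝ) ≤ 3 * A := by linarith
  refine ⟨(A * (1 + 2*T)) ^ q, Real.rpow_nonneg (by nlinarith) q, fun t ht => ?_⟩
  rcases le_total t T with h | h
  · have h1 : (A * (1 + 2*t)) ^ q ≤ (A * (1 + 2*T)) ^ q := by
      apply Real.rpow_le_rpow (by nlinarith) (by nlinarith) hq.le
    have h2 : 0 ≤ B * t ^ p := mul_nonneg hB.le (Real.rpow_nonneg ht p)
    linarith
  · have ht1 : (1:ℝ) ≤ t := hT1.trans h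
    have htpos : (0:ℝ) < t := lt_of_lt_of_le one_pos ht1
    have key : (A * (1 + 2*t)) ^ q ≤ B * t ^ p := by
      have h1 : (A * (1 + 2*t)) ^ q ≤ (3 * A * t) ^ q := by
        apply Real.rpow_le_rpow (by nlinarith) (by nlinarith) hq.le
      have h2 : (3 * A * t) ^ q = (3*A) ^ q * t ^ q := Real.mul_rpow h3A ht
      have h3 : (3*A) ^ q ≤ B * t ^ (p - q) := by
        have hTle : T0 ≤ t := (le_max_right 1 T0).trans h
        have h4 : T0 ^ (p - q) ≤ t ^ (p - q) := by
          apply Real.rpow_le_rpow (Real.rpow_nonneg (by positivity) _) hTle hpq.le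
        have h5 : T0 ^ (p - q) = (3*A) ^ q / B :=
          Real.rpow_inv_rpow (by positivity) (ne_of_gt hpq)
        rw [h5] at h4
        calc (3*A) ^ q = B * ((3*A) ^ q / B) := by field_simp
        _ ≤ B * t ^ (p-q) := by nlinarith [Real.rpow_nonneg htpos.le (p-q)]
      have h6 : t ^ (p - q) * t ^ q = t ^ p := by
        rw [← Real.rpow_add htpos]; ring_nf
      calc (A * (1 + 2*t)) ^ q ≤ (3*A) ^ q * t ^ q := by rw [← h2]; exact h1
      _ ≤ (B * t ^ (p-q)) * t ^ q := by
          have := Real.rpow_nonneg htpos.le q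
          nlinarith
      _ = B * t ^ p := by rw [mul_assoc, h6]
    have h2 : (0:ℝ) ≤ (A * (1 + 2*T)) ^ q := Real.rpow_nonneg (by nlinarith) q
    linarith

lemma exp_neg_nat_le (k : ℕ) : Real.exp (-(k:ℝ)) ≤ (1/2:ℝ)^k := by
  have h2 : (2:ℝ) ≤ Real.exp 1 := by have := Real.add_one_le_exp 1; linarith
  have h3 : Real.exp (-(k:ℝ)) = (Real.exp (-1))^k := by
    rw [← Real.exp_nat_mul]; norm_num
  rw [h3]
  apply pow_le_pow_left₀ (Real.exp_pos _).le
  rw [Real.exp_neg, show (1/2:ℝ) = 2⁻¹ by norm_num]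
  exact inv_anti₀ two_pos h2

lemma lux_const_eq_one {Ω : Type*} [MeasurableSpace Ω] (P : Measure Ω)
    [IsProbabilityMeasure P] {q : ℝ} (hq : 0 < q) :
    luxNorm P (ThetaOrlicz q) (fun _ => (Real.log 2) ^ q⁻¹) = 1 := by
  set a : ℝ := (Real.log 2) ^ q⁻¹ with ha_def
  have hlog : 0 < Real.log 2 := Real.log_pos one_lt_two
  have ha : 0 < a := Real.rpow_pos_of_pos hlog _
  have haq : a ^ q = Real.log 2 := Real.rpow_inv_rpow hlog.le hq.ne'
  refine le_antisymm (sInf_le ⟨one_pos, ENNReal.one_ne_top, ?_⟩) (le_sInf ?_)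
  · have h0 : ThetaOrlicz q a = 1 := by
      unfold ThetaOrlicz
      rw [abs_of_nonneg ha.le, haq, Real.exp_log two_pos]; norm_num
    have h1 : ENNReal.ofReal (ThetaOrlicz q (|a| / (1:ℝ≥0∞).toReal)) = 1 := by
      rw [ENNReal.toReal_one, div_one, abs_of_nonneg ha.le, h0, ENNReal.ofReal_one]
    simp only [lintegral_const, measure_univ, mul_one, h1, le_refl]
  · rintro c ⟨hc0, hcT, hint⟩
    by_contra hlt
    push_neg at hlt
    have hct1 : c.toReal < 1 := by
      have := ENNReal.toReal_lt_toReal hcT ENNReal.one_ne_top |>.2 hlt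
      simpa using this
    have hct0 : 0 < c.toReal := ENNReal.toReal_pos hc0.ne' hcT
    have hbig : 1 < ThetaOrlicz q (|a| / c.toReal) := by
      rw [abs_of_nonneg ha.le]
      have h2 : a < a / c.toReal := by
        rw [lt_div_iff₀ hct0]; nlinarith
      have h3 : a ^ q < (a / c.toReal) ^ q := Real.rpow_lt_rpow ha.le h2 hq
      unfold ThetaOrlicz
      have h4 : Real.exp (Real.log 2) < Real.exp (|a / c.toReal| ^ q) := by
        rw [abs_of_nonneg (by positivity)]
        rw [← haq]; exact Real.exp_lt_exp.2 h3
      rw [Real.exp_log two_pos] at h4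
      linarith
    have : (1:ℝ≥0∞) < ∫⁻ _, ENNReal.ofReal (ThetaOrlicz q (|a| / c.toReal)) ∂P := by
      rw [lintegral_const, measure_univ, mul_one]
      rw [← ENNReal.ofReal_one]
      exact ENNReal.ofReal_lt_ofReal_iff_of_nonneg zero_le_one |>.2 hbig
    exact absurd hint (not_le.2 this)

lemma lux_lower {Ω : Type*} [MeasurableSpace Ω] (P : Measure Ω) [IsProbabilityMeasure P]
    {q : ℝ} (hq : 0 < q) {τ0 : Ω → ℝ} (hge2 : ∀ᵐ ω ∂P, 2 ≤ τ0 ω) :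
    ENNReal.ofReal (2 / (Real.log 2) ^ q⁻¹) ≤ luxNorm P (ThetaOrlicz q) τ0 := by
  apply le_sInf
  rintro c ⟨hc0, hcT, hint⟩
  have hct : 0 < c.toReal := ENNReal.toReal_pos hc0.ne' hcT
  have hconst : ENNReal.ofReal (ThetaOrlicz q (2 / c.toReal)) ≤ 1 := by
    have h1 : (ENNReal.ofReal (ThetaOrlicz q (2 / c.toReal))) =
        ∫⁻ _, ENNReal.ofReal (ThetaOrlicz q (2 / c.toReal)) ∂P := by
      rw [lintegral_const, measure_univ, mul_one]
    rw [h1]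
    refine le_trans (lintegral_mono_ae ?_) hint
    filter_upwards [hge2] with ω hω
    apply ENNReal.ofReal_le_ofReal
    apply theta_mono hq.le (by positivity)
    have h2 : (2:ℝ) ≤ |τ0 ω| := le_trans hω (le_abs_self _)
    exact (div_le_div_iff_of_pos_right hct).2 h2
  rw [ENNReal.ofReal_le_one] at hconst
  have hexp : Real.exp (|2 / c.toReal| ^ q) ≤ 2 := by
    have := hconst; unfold ThetaOrlicz at this; linarith
  have hlog : |2 / c.toReal| ^ q ≤ Real.log 2 := by
    refine Real.exp_le_exp.1 ?_
    rw [Real.exp_log two_pos]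
    exact hexp
  have hL : (0:ℝ) < (Real.log 2) ^ q⁻¹ :=
    Real.rpow_pos_of_pos (Real.log_pos one_lt_two) _
  have h3 : 2 / c.toReal ≤ (Real.log 2) ^ q⁻¹ := by
    have h4 : 2 / c.toReal = (|2 / c.toReal| ^ q) ^ q⁻¹ := by
      rw [abs_of_nonneg (by positivity), Real.rpow_rpow_inv (by positivity) hq.ne']
    rw [h4]
    exact Real.rpow_le_rpow (Real.rpow_nonneg (abs_nonneg _) q) hlog (inv_nonneg.2 hq.le)
  have h5 : 2 / (Real.log 2) ^ q⁻¹ ≤ c.toReal := by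
    rw [div_le_iff₀ hL]
    rw [div_le_iff₀ hct] at h3
    nlinarith
  calc ENNReal.ofReal (2 / (Real.log 2) ^ q⁻¹) ≤ ENNReal.ofReal c.toReal :=
        ENNReal.ofReal_le_ofReal h5
  _ = c := ENNReal.ofReal_toReal hcT

lemma lux_div_eq_one {Ω : Type*} [MeasurableSpace Ω] (P : Measure Ω) [IsProbabilityMeasure P]
    {q : ℝ} (hq : 0 < q) {τ0 : Ω → ℝ} (hτ0 : ∀ ω, 0 ≤ τ0 ω)
    (hge2 : ∀ᵐ ω ∂P, 2 ≤ τ0 ω)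
    (hfinN : luxNorm P (ThetaOrlicz q) τ0 ≠ ∞) :
    luxNorm P (ThetaOrlicz q) (fun ω => τ0 ω / (luxNorm P (ThetaOrlicz q) τ0).toReal) = 1 := by
  set Sset := {c : ℝ≥0∞ | 0 < c ∧ c ≠ ∞ ∧
    ∫⁻ ω, ENNReal.ofReal (ThetaOrlicz q (|τ0 ω| / c.toReal)) ∂P ≤ 1} with hSset
  have hSne : Sset.Nonempty := by
    by_contra h
    rw [Set.not_nonempty_iff_eq_empty] at h
    exact hfinN (by rw [luxNorm, ← hSset, h, sInf_empty])
  set N := luxNorm P (ThetaOrlicz q) τ0 with hN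
  have hNS : N = sInf Sset := rfl
  have hN0 : 0 < N := by
    refine lt_of_lt_of_le ?_ (lux_lower P hq hge2)
    apply ENNReal.ofReal_pos.2
    positivity
  have hNr : 0 < N.toReal := ENNReal.toReal_pos hN0.ne' hfinN
  have hpt : ∀ (c : ℝ≥0∞), c ≠ ∞ → ∀ ω,
      |τ0 ω / N.toReal| / c.toReal = τ0 ω / (N * c).toReal := by
    intro c hcT ω
    rw [abs_of_nonneg (div_nonneg (hτ0 ω) hNr.le), div_div, ENNReal.toReal_mul]
  apply le_antisymm
  · by_contra hgt
    push_neg at hgt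
    obtain ⟨c, hc1, hclt⟩ := exists_between hgt
    have hcT : c ≠ ∞ := ne_top_of_lt hclt
    have hcmem : c ∈ {c : ℝ≥0∞ | 0 < c ∧ c ≠ ∞ ∧
        ∫⁻ ω, ENNReal.ofReal (ThetaOrlicz q
          (|τ0 ω / N.toReal| / c.toReal)) ∂P ≤ 1} := by
      refine ⟨zero_lt_one.trans hc1, hcT, ?_⟩
      have hNc : N < N * c := by
        nth_rewrite 1 [← mul_one N]
        exact (ENNReal.mul_lt_mul_iff_right hN0.ne' hfinN).2 hc1
      obtain ⟨c1, hc1mem, hc1lt⟩ := exists_lt_of_csInf_lt hSne (hNS ▸ hNc)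
      obtain ⟨hc10, hc1T, hc1int⟩ := hc1mem
      refine le_trans (lintegral_mono fun ω => ?_) hc1int
      apply ENNReal.ofReal_le_ofReal
      rw [hpt c hcT ω, abs_of_nonneg (hτ0 ω)]
      apply theta_mono hq.le (div_nonneg (hτ0 ω) ENNReal.toReal_nonneg)
      apply div_le_div_of_nonneg_left (hτ0 ω) (ENNReal.toReal_pos hc10.ne' hc1T)
      exact ENNReal.toReal_mono (ENNReal.mul_ne_top hfinN hcT) hc1lt.le
    have : luxNorm P (ThetaOrlicz q) (fun ω => τ0 ω / N.toReal) ≤ c := sInf_le hcmem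
    exact absurd (this.trans_lt hclt) (lt_irrefl _)
  · apply le_sInf
    rintro c ⟨hc0, hcT, hcint⟩
    by_contra hlt
    push_neg at hlt
    have hmem : N * c ∈ Sset := by
      refine ⟨ENNReal.mul_pos hN0.ne' hc0.ne', ENNReal.mul_ne_top hfinN hcT, ?_⟩
      refine le_trans (le_of_eq (lintegral_congr fun ω => ?_)) hcint
      rw [abs_of_nonneg (hτ0 ω), ← hpt c hcT ω]
    have h1 : N ≤ N * c := hNS ▸ sInf_le hmem
    have h2 : N * c < N := by
      nth_rewrite 2 [← mul_one N]
      exact (ENNReal.mul_lt_mul_iff_right hN0.ne' hfinN).2 hlt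
    exact absurd (h1.trans_lt h2) (lt_irrefl _)

set_option maxHeartbeats 2000000 in
/-- for `0 < q < p`, a field whose supremum is in the exponential Orlicz
space `L(Θ_p)` admits a factorable modulus of continuity with factor normed in `L(Θ_q)`. -/
theorem factorable_continuity_exponential_orlicz
    {X Ω : Type*} [MetricSpace X] [CompactSpace X]
    [MeasurableSpace X] [BorelSpace X] [MeasurableSpace Ω]
    (P : Measure Ω) [IsProbabilityMeasure P]
    (p q : ℝ) (hq : 0 < q) (hqp : q < p)
    (ξ : X → Ω → ℝ)
    (hmeas : Measurable fun z : X × Ω => ξ z.1 z.2)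
    (hcont : ∀ᵐ ω ∂P, Continuous fun x => ξ x ω)
    (hfin : luxNorm P (ThetaOrlicz p) (fun ω => ⨆ x : X, |ξ x ω|) < ∞) :
    ∃ (g : ℝ → ℝ) (τ : Ω → ℝ),
      IsScalingFunction g (Metric.diam (Set.univ : Set X)) ∧
      Measurable τ ∧ (∀ ω, 0 ≤ τ ω) ∧ luxNorm P (ThetaOrlicz q) τ = 1 ∧
      ∀ᵐ ω ∂P, ∀ δ ∈ Set.Icc (0 : ℝ) (Metric.diam (Set.univ : Set X)),
        modCont (fun x => ξ x ω) δ ≤ τ ω * g δ := by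
  classical
  have hp : 0 < p := hq.trans hqp
  by_cases hne : Nonempty X
  case neg =>
    rw [not_nonempty_iff] at hne
    refine ⟨fun _ => 0, fun _ => (Real.log 2) ^ q⁻¹,
      ⟨continuousOn_const, fun δ _ => le_rfl, fun a _ b _ _ => le_rfl, rfl⟩,
      measurable_const,
      fun _ => Real.rpow_nonneg (Real.log_nonneg one_le_two) _,
      lux_const_eq_one P hq, ?_⟩
    refine Filter.Eventually.of_forall fun ω δ _ => ?_
    rw [mul_zero]
    apply Real.sSup_le _ le_rfl
    rintro r ⟨x, y, -⟩
    exact (hne.false x).elim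
  case pos =>
  obtain ⟨u, hu⟩ := TopologicalSpace.exists_dense_seq X
  have hmx : ∀ x : X, Measurable fun ω => ξ x ω := fun x => hmeas.comp measurable_prodMk_left
  -- the countable supremum of the field
  set Sinf : Ω → ℝ≥0∞ := fun ω => ⨆ n : ℕ, (‖ξ (u n) ω‖₊ : ℝ≥0∞) with hSinf_def
  have hSmeas : Measurable Sinf := Measurable.iSup fun n => (hmx (u n)).nnnorm.coe_nnreal_ennreal
  set s : Ω → ℝ := fun ω => (Sinf ω).toReal with hs_def
  have hsmeas : Measurable s := ENNReal.measurable_toReal.comp hSmeas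
  have hs0 : ∀ ω, 0 ≤ s ω := fun ω => ENNReal.toReal_nonneg
  -- the countable modulus of continuity
  set Minf : ℝ → Ω → ℝ≥0∞ := fun δ ω => ⨆ k : ℕ × ℕ,
    if dist (u k.1) (u k.2) ≤ δ then (‖ξ (u k.1) ω - ξ (u k.2) ω‖₊ : ℝ≥0∞) else 0
    with hMinf_def
  have hMmeas : ∀ δ, Measurable (Minf δ) := by
    intro δ
    apply Measurable.iSup
    intro k
    by_cases h : dist (u k.1) (u k.2) ≤ δ
    · simp only [if_pos h]; exact ((hmx _).sub (hmx _)).nnnorm.coe_nnreal_ennreal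
    · simp only [if_neg h]; exact measurable_const
  have hMmono : ∀ {δ δ' : ℝ}, δ ≤ δ' → ∀ ω, Minf δ ω ≤ Minf δ' ω := by
    intro δ δ' hδ ω
    apply iSup_mono
    intro k
    by_cases h : dist (u k.1) (u k.2) ≤ δ
    · rw [if_pos h, if_pos (h.trans hδ)]
    · rw [if_neg h]; exact zero_le
  have hMleS : ∀ δ ω, Minf δ ω ≤ 2 * Sinf ω := by
    intro δ ω
    apply iSup_le
    intro k
    by_cases h : dist (u k.1) (u k.2) ≤ δ
    · rw [if_pos h]
      calc (‖ξ (u k.1) ω - ξ (u k.2) ω‖₊ : ℝ≥0∞)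
          ≤ (‖ξ (u k.1) ω‖₊ : ℝ≥0∞) + (‖ξ (u k.2) ω‖₊ : ℝ≥0∞) := by
            rw [← ENNReal.coe_add]; exact ENNReal.coe_le_coe.2 (nnnorm_sub_le _ _)
      _ ≤ Sinf ω + Sinf ω :=
            add_le_add (le_iSup (fun n : ℕ => (‖ξ (u n) ω‖₊ : ℝ≥0∞)) k.1)
              (le_iSup (fun n : ℕ => (‖ξ (u n) ω‖₊ : ℝ≥0∞)) k.2)
      _ = 2 * Sinf ω := (two_mul _).symm
    · rw [if_neg h]; exact zero_le
  -- key modulus bound via dense sequence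
  have hKL : ∀ ω : Ω, Continuous (fun x => ξ x ω) → ∀ δ δ' : ℝ, δ < δ' →
      Minf δ' ω ≠ ∞ → modCont (fun x => ξ x ω) δ ≤ (Minf δ' ω).toReal := by
    intro ω hc δ δ' hδδ hMfin
    apply Real.sSup_le _ ENNReal.toReal_nonneg
    rintro r ⟨x, y, hxy, rfl⟩
    apply le_of_forall_pos_le_add
    intro ε hε
    obtain ⟨η1, hη1, hx1⟩ := Metric.continuous_iff.1 hc x (ε/2) (by positivity)
    obtain ⟨η2, hη2, hy1⟩ := Metric.continuous_iff.1 hc y (ε/2) (by positivity)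
    have hd2 : 0 < (δ' - δ)/2 := by linarith
    set η : ℝ := min (min η1 η2) ((δ' - δ)/2) with hη_def
    have hη : 0 < η := lt_min (lt_min hη1 hη2) hd2
    obtain ⟨i, hi⟩ := hu.exists_dist_lt x hη
    obtain ⟨j, hj⟩ := hu.exists_dist_lt y hη
    have hde : dist (u i) (u j) ≤ δ' := by
      have h1 := dist_triangle4 (u i) x y (u j)
      have h2 : dist (u i) x < η := by rw [dist_comm]; exact hi
      have h3 : dist y (u j) < η := hj
      have h4 : η ≤ (δ' - δ)/2 := min_le_right _ _
      linarith
    have hterm : (‖ξ (u i) ω - ξ (u j) ω‖₊ : ℝ≥0∞) ≤ Minf δ' ω := by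
      have h5 := le_iSup (fun k : ℕ × ℕ =>
        if dist (u k.1) (u k.2) ≤ δ' then (‖ξ (u k.1) ω - ξ (u k.2) ω‖₊ : ℝ≥0∞) else 0)
        ((i, j) : ℕ × ℕ)
      rw [if_pos hde] at h5
      exact h5
    have h6 : |ξ (u i) ω - ξ (u j) ω| ≤ (Minf δ' ω).toReal := by
      have h7 := ENNReal.toReal_mono hMfin hterm
      rwa [ENNReal.coe_toReal, coe_nnnorm, Real.norm_eq_abs] at h7
    have hfx : |ξ x ω - ξ (u i) ω| < ε/2 := by
      have h8 : dist (u i) x < η1 := by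
        rw [dist_comm]
        exact lt_of_lt_of_le hi ((min_le_left _ _).trans (min_le_left _ _))
      have h9 := hx1 (u i) h8
      rw [Real.dist_eq] at h9
      rw [abs_sub_comm]
      exact h9
    have hfy : |ξ (u j) ω - ξ y ω| < ε/2 := by
      have h8 : dist (u j) y < η2 := by
        rw [dist_comm]
        exact lt_of_lt_of_le hj ((min_le_left _ _).trans (min_le_right _ _))
      have h9 := hy1 (u j) h8
      rw [Real.dist_eq] at h9
      exact h9
    have htri1 : |ξ x ω - ξ y ω| ≤ |ξ x ω - ξ (u i) ω| + |ξ (u i) ω - ξ y ω| :=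
      abs_sub_le _ _ _
    have htri2 : |ξ (u i) ω - ξ y ω| ≤ |ξ (u i) ω - ξ (u j) ω| + |ξ (u j) ω - ξ y ω| :=
      abs_sub_le _ _ _
    linarith
  -- selection of small scales with small exceptional probability
  have hsel : ∀ t : ℝ, 0 < t → ∀ η : ℝ≥0∞, 0 < η → ∀ δub : ℝ, 0 < δub →
      ∃ δ : ℝ, 0 < δ ∧ δ < δub ∧ P {ω | ENNReal.ofReal t < Minf δ ω} ≤ η := by
    intro t ht η hη δub hδub
    set Bs : ℕ → Set Ω := fun j => {ω | ENNReal.ofReal t < Minf (δub/((j:ℝ)+2)) ω} with hBs_def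
    have hBsm : ∀ j, MeasurableSet (Bs j) := fun j =>
      measurableSet_lt measurable_const (hMmeas _)
    have hanti : Antitone Bs := by
      intro j1 j2 h12 ω hω
      simp only [hBs_def, Set.mem_setOf_eq] at hω ⊢
      refine lt_of_lt_of_le hω (hMmono ?_ ω)
      apply div_le_div_of_nonneg_left hδub.le (by positivity)
      have : (j1:ℝ) ≤ j2 := Nat.cast_le.2 h12
      linarith
    have hnull : P (⋂ j, Bs j) = 0 := by
      have hsub : (⋂ j, Bs j) ⊆ {ω | ¬ Continuous (fun x => ξ x ω)} := by
        intro ω hω hcω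
        obtain ⟨δ0, hδ0, hδ0'⟩ := Metric.uniformContinuous_iff.1
          (CompactSpace.uniformContinuous_of_continuous hcω) t ht
        obtain ⟨j, hjgt⟩ := exists_nat_gt (δub/δ0)
        have hjlt : δub/((j:ℝ)+2) < δ0 := by
          rw [div_lt_iff₀ (by positivity)]
          rw [div_lt_iff₀ hδ0] at hjgt
          nlinarith
        have hM : Minf (δub/((j:ℝ)+2)) ω ≤ ENNReal.ofReal t := by
          apply iSup_le
          intro k
          by_cases hk : dist (u k.1) (u k.2) ≤ δub/((j:ℝ)+2)
          · rw [if_pos hk]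
            have h1 : dist (ξ (u k.1) ω) (ξ (u k.2) ω) < t := hδ0' (lt_of_le_of_lt hk hjlt)
            rw [Real.dist_eq] at h1
            rw [← enorm_eq_nnnorm, Real.enorm_eq_ofReal_abs]
            exact ENNReal.ofReal_le_ofReal h1.le
          · rw [if_neg hk]; exact zero_le
        have hmem := Set.mem_iInter.1 hω j
        simp only [hBs_def, Set.mem_setOf_eq] at hmem
        exact absurd hmem (not_lt.2 hM)
      have h0 : P {ω | ¬ Continuous (fun x => ξ x ω)} = 0 := ae_iff.1 hcont
      exact measure_mono_null hsub h0
    have htend := tendsto_measure_iInter_atTop (fun j => (hBsm j).nullMeasurableSet) hanti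
      ⟨0, measure_ne_top P _⟩
    rw [hnull] at htend
    have hev := htend.eventually (gt_mem_nhds hη)
    obtain ⟨j, hj⟩ := hev.exists
    have hjP : P (Bs j) < η := hj
    refine ⟨δub/((j:ℝ)+2), by positivity, ?_, hjP.le⟩
    rw [div_lt_iff₀ (by positivity)]
    nlinarith
  -- extract a finite Luxemburg ball for the supremum
  obtain ⟨c1, hc1pos, hc1T, hc1int⟩ : ∃ c1 : ℝ≥0∞, 0 < c1 ∧ c1 ≠ ∞ ∧
      ∫⁻ ω, ENNReal.ofReal (ThetaOrlicz p (|(⨆ x : X, |ξ x ω|)| / c1.toReal)) ∂P ≤ 1 := by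
    have hne' : {c : ℝ≥0∞ | 0 < c ∧ c ≠ ∞ ∧
        ∫⁻ ω, ENNReal.ofReal (ThetaOrlicz p
          (|(⨆ x : X, |ξ x ω|)| / c.toReal)) ∂P ≤ 1}.Nonempty := by
      by_contra h
      rw [Set.not_nonempty_iff_eq_empty] at h
      rw [luxNorm, h, sInf_empty] at hfin
      exact absurd hfin (lt_irrefl _)
    exact hne'
  set c0 : ℝ := max c1.toReal 1 with hc0_def
  have hc0pos : 0 < c0 := lt_of_lt_of_le one_pos (le_max_right _ _)
  have hc0ge1 : (1:ℝ) ≤ c0 := le_max_right _ _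
  have hc0gec1 : c1.toReal ≤ c0 := le_max_left _ _
  have hc0p : (0:ℝ) < c0 ^ p := Real.rpow_pos_of_pos hc0pos p
  -- Young-type constants
  obtain ⟨C', hC'0, hC'⟩ := young_aux hq hqp (A := 2/c0) (B := 1/(2*c0 ^ p))
    (by positivity) (by positivity)
  have hCex : ∀ k : ℕ, ∃ C : ℝ, 0 ≤ C ∧ ∀ t : ℝ, 0 ≤ t →
      ((2:ℝ)^(k+2)/c0 * (1 + 2*t)) ^ q ≤ (1/(2*c0 ^ p)) * t ^ p + C :=
    fun k => young_aux hq hqp (by positivity) (by positivity)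
  choose C hC0 hCk using hCex
  set ηr : ℕ → ℝ := fun k => Real.exp (-(2*C k + 2*(k:ℝ) + 1)) with hηr_def
  have hηrpos : ∀ k, 0 < ηr k := fun k => Real.exp_pos _
  -- the scale sequence
  have hex : ∀ (k : ℕ) (x : ℝ), 0 < x → ∃ z : ℝ, 0 < z ∧ z < x/2 ∧
      P {ω | ENNReal.ofReal ((1/2:ℝ)^(k+1)) < Minf z ω} ≤ ENNReal.ofReal (ηr k) := by
    intro k x hx
    exact hsel ((1/2:ℝ)^(k+1)) (by positivity) _ (ENNReal.ofReal_pos.2 (hηrpos k))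
      (x/2) (by positivity)
  choose! F hF1 hF2 hF3 using hex
  set d : ℕ → ℝ := fun k => Nat.rec (F 0 2) (fun k ih => F (k+1) ih) k with hd_def
  have hd0 : d 0 = F 0 2 := rfl
  have hdsucc : ∀ k, d (k+1) = F (k+1) (d k) := fun k => rfl
  have hdpos : ∀ k, 0 < d k := by
    intro k
    induction k with
    | zero => rw [hd0]; exact hF1 0 2 two_pos
    | succ k ih => rw [hdsucc]; exact hF1 (k+1) (d k) ih
  have hdhalf : ∀ k, d (k+1) < d k / 2 := by
    intro k; rw [hdsucc]; exact hF2 (k+1) (d k) (hdpos k)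
  set B : ℕ → Set Ω := fun k => {ω | ENNReal.ofReal ((1/2:ℝ)^(k+1)) < Minf (d k) ω}
    with hB_def
  have hBmeas : ∀ k, MeasurableSet (B k) := fun k =>
    measurableSet_lt measurable_const (hMmeas _)
  have hPB : ∀ k, P (B k) ≤ ENNReal.ofReal (ηr k) := by
    intro k
    cases k with
    | zero => exact hF3 0 2 two_pos
    | succ k => exact hF3 (k+1) (d k) (hdpos k)
  have hddecay : ∀ k, d k ≤ d 0 * (1/2:ℝ)^k := by
    intro k
    induction k with
    | zero => simp
    | succ k ih =>
      have h1 : d (k+1) ≤ d k / 2 := (hdhalf k).le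
      calc d (k+1) ≤ d k / 2 := h1
      _ ≤ (d 0 * (1/2:ℝ)^k)/2 := by linarith
      _ = d 0 * (1/2:ℝ)^(k+1) := by ring
  -- the scaling function
  set g0 : ℝ → ℝ := fun δ => ∑' k : ℕ, (1/2:ℝ)^(k+1) * (min 1 (max (δ / d k) 0)) with hg0_def
  have hterm_nonneg : ∀ δ (k:ℕ), 0 ≤ (1/2:ℝ)^(k+1) * (min 1 (max (δ / d k) 0)) := by
    intro δ k
    apply mul_nonneg (by positivity)
    exact le_min zero_le_one (le_max_right _ _)
  have hterm_le : ∀ δ (k:ℕ), (1/2:ℝ)^(k+1) * (min 1 (max (δ / d k) 0)) ≤ (1/2:ℝ)^(k+1) := by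
    intro δ k
    have h1 : min 1 (max (δ / d k) 0) ≤ 1 := min_le_left _ _
    nlinarith [pow_pos (by norm_num : (0:ℝ) < 1/2) (k+1)]
  have hgeo : Summable (fun k : ℕ => (1/2:ℝ)^(k+1)) := by
    simpa [pow_succ] using summable_geometric_two.mul_right (1/2:ℝ)
  have hsumm : ∀ δ, Summable (fun k : ℕ => (1/2:ℝ)^(k+1) * (min 1 (max (δ / d k) 0))) :=
    fun δ => Summable.of_nonneg_of_le (hterm_nonneg δ) (hterm_le δ) hgeo
  have hg0cont : Continuous g0 := by
    rw [hg0_def]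
    apply continuous_tsum (u := fun k : ℕ => (1/2:ℝ)^(k+1))
    · intro k
      exact continuous_const.mul
        (continuous_const.min ((continuous_id.div_const (d k)).max continuous_const))
    · exact hgeo
    · intro k δ
      rw [Real.norm_eq_abs, abs_of_nonneg (hterm_nonneg δ k)]
      exact hterm_le δ k
  have hg0mono : Monotone g0 := by
    intro a b hab
    apply Summable.tsum_le_tsum _ (hsumm a) (hsumm b)
    intro k
    apply mul_le_mul_of_nonneg_left _ (by positivity)
    apply min_le_min le_rfl
    apply max_le_max _ le_rfl
    exact (div_le_div_iff_of_pos_right (hdpos k)).2 hab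
  have hg00 : g0 0 = 0 := by
    rw [hg0_def]
    convert tsum_zero with k
    simp
  have hg0nonneg : ∀ δ, 0 ≤ g0 δ := fun δ => tsum_nonneg (hterm_nonneg δ)
  have hg0lb : ∀ (k:ℕ) (δ:ℝ), d k ≤ δ → (1/2:ℝ)^(k+1) ≤ g0 δ := by
    intro k δ hkδ
    have h2 : (1:ℝ) ≤ δ / d k := (one_le_div (hdpos k)).2 hkδ
    have h1 : min 1 (max (δ / d k) 0) = 1 := by
      rw [max_eq_left (le_trans zero_le_one h2), min_eq_left h2]
    have h3 := Summable.le_tsum (hsumm δ) k (fun j _ => hterm_nonneg δ j)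
    rw [h1, mul_one] at h3
    exact h3
  -- the weight
  set W : Ω → ℝ≥0∞ := fun ω => 2 ⊔ ⨆ k : ℕ, (B k).indicator (fun _ => (2:ℝ≥0∞)^(k+2)) ω
    with hW_def
  have hWmeas : Measurable W := (Measurable.sup (f := fun _ => (2:ℝ≥0∞))
      (g := fun ω => ⨆ k : ℕ, (B k).indicator (fun _ => (2:ℝ≥0∞)^(k+2)) ω) measurable_const
    (Measurable.iSup fun k => measurable_const.indicator (hBmeas k)) :)
  set w : Ω → ℝ := fun ω => (W ω).toReal with hw_def
  have hwmeas : Measurable w := ENNReal.measurable_toReal.comp hWmeas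
  set τ0 : Ω → ℝ := fun ω => (1 + 2 * s ω) * w ω with hτ0_def
  have hτ0meas : Measurable τ0 := (measurable_const.add (hsmeas.const_mul 2)).mul hwmeas
  have hτ0nonneg : ∀ ω, 0 ≤ τ0 ω := fun ω =>
    mul_nonneg (by nlinarith [hs0 ω]) ENNReal.toReal_nonneg
  -- Borel-Cantelli
  have hhalflt : ENNReal.ofReal (1/2) < 1 := ENNReal.ofReal_lt_one.2 (by norm_num)
  have hinvfin : (1 - ENNReal.ofReal (1/2))⁻¹ ≠ ⊤ := by
    rw [Ne, ENNReal.inv_eq_top, tsub_eq_zero_iff_le]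
    exact not_le.2 hhalflt
  have hηrle : ∀ k : ℕ, ηr k ≤ (1/2:ℝ)^k := by
    intro k
    have h1 : ηr k ≤ Real.exp (-(k:ℝ)) := by
      simp only [hηr_def]
      apply Real.exp_le_exp.2
      have h2 := hC0 k
      have h3 : (0:ℝ) ≤ (k:ℝ) := Nat.cast_nonneg k
      linarith
    exact h1.trans (exp_neg_nat_le k)
  have hBC : ∑' k, P (B k) ≠ ∞ := by
    have h1 : ∀ k:ℕ, P (B k) ≤ (ENNReal.ofReal (1/2))^k := by
      intro k
      refine (hPB k).trans ?_
      rw [← ENNReal.ofReal_pow (by norm_num)]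
      exact ENNReal.ofReal_le_ofReal (hηrle k)
    have h3 : ∑' k, P (B k) ≤ (1 - ENNReal.ofReal (1/2))⁻¹ := by
      calc ∑' k, P (B k) ≤ ∑' k:ℕ, (ENNReal.ofReal (1/2))^k := ENNReal.tsum_le_tsum h1
      _ = _ := ENNReal.tsum_geometric _
    exact ne_top_of_le_ne_top hinvfin h3
  -- the a.e. good set with all its structure
  have hKey : ∀ᵐ ω ∂P, Continuous (fun x => ξ x ω) ∧ Sinf ω ≠ ∞ ∧
      s ω ≤ (⨆ x : X, |ξ x ω|) ∧
      ((W ω = 2 ∧ ∀ k, ω ∉ B k) ∨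
        ∃ m : ℕ, ω ∈ B m ∧ W ω = (2:ℝ≥0∞)^(m+2) ∧ ∀ k, ω ∈ B k → k ≤ m) := by
    filter_upwards [hcont, ae_eventually_notMem hBC] with ω hcω hev
    have hbd : ∃ b : ℝ, 0 ≤ b ∧ ∀ x : X, |ξ x ω| ≤ b := by
      obtain ⟨x0, hx0⟩ := (continuous_abs.comp hcω).exists_forall_ge
        (by rw [Filter.cocompact_eq_bot]; exact tendsto_bot)
      exact ⟨|ξ x0 ω|, abs_nonneg _, fun x => hx0 x⟩
    obtain ⟨b, hb0, hb⟩ := hbd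
    have hSle : Sinf ω ≤ ENNReal.ofReal b := by
      apply iSup_le
      intro n
      rw [← enorm_eq_nnnorm, Real.enorm_eq_ofReal_abs]
      exact ENNReal.ofReal_le_ofReal (hb _)
    have hSfin : Sinf ω ≠ ∞ := ne_top_of_le_ne_top ENNReal.ofReal_ne_top hSle
    refine ⟨hcω, hSfin, ?_, ?_⟩
    · have hbdd : BddAbove (Set.range fun x : X => |ξ x ω|) :=
        ⟨b, by rintro r ⟨x, rfl⟩; exact hb x⟩
      have h1 : Sinf ω ≤ ENNReal.ofReal (⨆ x : X, |ξ x ω|) := by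
        apply iSup_le
        intro n
        rw [← enorm_eq_nnnorm, Real.enorm_eq_ofReal_abs]
        exact ENNReal.ofReal_le_ofReal (le_ciSup hbdd (u n))
      have h2 := ENNReal.toReal_mono ENNReal.ofReal_ne_top h1
      rwa [ENNReal.toReal_ofReal
        (le_ciSup_of_le hbdd (Classical.arbitrary X) (abs_nonneg _))] at h2
    · obtain ⟨n0, hn0⟩ := Filter.eventually_atTop.1 hev
      by_cases hI : ∃ k, ω ∈ B k
      · obtain ⟨k0, hk0⟩ := hI
        have hIfin : {k : ℕ | ω ∈ B k}.Finite := by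
          apply Set.Finite.subset (Set.finite_Iio n0)
          intro k hk
          simp only [Set.mem_Iio]
          by_contra hk2
          exact (hn0 k (not_lt.1 hk2)) hk
        have hFsne : hIfin.toFinset.Nonempty := by
          rw [Set.Finite.toFinset_nonempty]; exact ⟨k0, hk0⟩
        set m := hIfin.toFinset.max' hFsne with hm
        have hmB : ω ∈ B m := by
          have := hIfin.toFinset.max'_mem hFsne
          rwa [Set.Finite.mem_toFinset] at this
        have hle : ∀ k, ω ∈ B k → k ≤ m := by
          intro k hk
          apply Finset.le_max'
          rw [Set.Finite.mem_toFinset]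
          exact hk
        right
        refine ⟨m, hmB, ?_, hle⟩
        have h2m : (2:ℝ≥0∞) ≤ 2^(m+2) := by
          calc (2:ℝ≥0∞) = 2^1 := (pow_one _).symm
          _ ≤ 2^(m+2) := pow_le_pow_right₀ one_le_two (by omega)
        have hiSup : (⨆ k : ℕ, (B k).indicator (fun _ => (2:ℝ≥0∞)^(k+2)) ω) = 2^(m+2) := by
          apply le_antisymm
          · apply iSup_le
            intro k
            by_cases hk : ω ∈ B k
            · rw [Set.indicator_of_mem hk]
              exact pow_le_pow_right₀ one_le_two (by have := hle k hk; omega)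
            · rw [Set.indicator_of_notMem hk]; exact zero_le
          · have h5 := le_iSup (fun k : ℕ => (B k).indicator (fun _ => (2:ℝ≥0∞)^(k+2)) ω) m
            rwa [Set.indicator_of_mem hmB] at h5
        simp only [hW_def]
        rw [hiSup, sup_eq_right.2 h2m]
      · push_neg at hI
        left
        refine ⟨?_, hI⟩
        have hiSup : (⨆ k : ℕ, (B k).indicator (fun _ => (2:ℝ≥0∞)^(k+2)) ω) = 0 :=
          ENNReal.iSup_eq_zero.2 fun k => Set.indicator_of_notMem (hI k) _
        simp only [hW_def]
        rw [hiSup, sup_eq_left.2 zero_le]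
  -- the exponential moment of the supremum
  have hEexp : ∫⁻ ω, ENNReal.ofReal (Real.exp ((s ω / c0) ^ p)) ∂P ≤ 2 := by
    have hc1t : 0 < c1.toReal := ENNReal.toReal_pos hc1pos.ne' hc1T
    have hptwise : ∀ᵐ ω ∂P, ENNReal.ofReal (Real.exp ((s ω / c0) ^ p)) ≤
        ENNReal.ofReal (ThetaOrlicz p (|(⨆ x : X, |ξ x ω|)| / c1.toReal)) + 1 := by
      filter_upwards [hKey] with ω hω
      obtain ⟨-, -, hsS, -⟩ := hω
      have h1 : ThetaOrlicz p (s ω / c0) + 1 = Real.exp ((s ω / c0) ^ p) := by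
        rw [theta_add_one, abs_of_nonneg (div_nonneg (hs0 ω) hc0pos.le)]
      have h2 : ThetaOrlicz p (s ω / c0) ≤
          ThetaOrlicz p (|(⨆ x : X, |ξ x ω|)| / c1.toReal) := by
        apply theta_mono hp.le (div_nonneg (hs0 ω) hc0pos.le)
        calc s ω / c0 ≤ s ω / c1.toReal :=
              div_le_div_of_nonneg_left (hs0 ω) hc1t hc0gec1
        _ ≤ |(⨆ x : X, |ξ x ω|)| / c1.toReal := by
            apply (div_le_div_iff_of_pos_right hc1t).2
            exact hsS.trans (le_abs_self _)
      calc ENNReal.ofReal (Real.exp ((s ω / c0) ^ p))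
          = ENNReal.ofReal (ThetaOrlicz p (s ω / c0) + 1) := by rw [h1]
      _ = ENNReal.ofReal (ThetaOrlicz p (s ω / c0)) + 1 := by
          rw [ENNReal.ofReal_add (theta_nonneg _ _) zero_le_one, ENNReal.ofReal_one]
      _ ≤ _ := add_le_add_left (ENNReal.ofReal_le_ofReal h2) 1
    calc ∫⁻ ω, ENNReal.ofReal (Real.exp ((s ω / c0) ^ p)) ∂P
        ≤ ∫⁻ ω, (ENNReal.ofReal (ThetaOrlicz p
            (|(⨆ x : X, |ξ x ω|)| / c1.toReal)) + 1) ∂P := lintegral_mono_ae hptwise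
    _ = (∫⁻ ω, ENNReal.ofReal (ThetaOrlicz p
          (|(⨆ x : X, |ξ x ω|)| / c1.toReal)) ∂P) + ∫⁻ _, 1 ∂P :=
        lintegral_add_right _ measurable_const
    _ ≤ 1 + 1 := by
        apply add_le_add hc1int
        simp [lintegral_const]
    _ = 2 := one_add_one_eq_two
  -- the Y function
  set Y : Ω → ℝ := fun ω => (s ω / c0) ^ p with hY_def
  have hY0 : ∀ ω, 0 ≤ Y ω := fun ω => Real.rpow_nonneg (div_nonneg (hs0 ω) hc0pos.le) p
  have hrpowcont : Continuous (fun x : ℝ => x ^ p) :=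
    continuous_id.rpow_const (fun x => Or.inr hp.le)
  have hYmeas : Measurable Y := hrpowcont.measurable.comp (hsmeas.div_const c0)
  have hexpYmeas : Measurable fun ω => ENNReal.ofReal (Real.exp (Y ω)) :=
    ENNReal.measurable_ofReal.comp (Real.continuous_exp.measurable.comp hYmeas)
  have hhalfY : ∀ ω, (1/(2*c0 ^ p)) * (s ω) ^ p = Y ω / 2 := by
    intro ω
    simp only [hY_def]
    rw [Real.div_rpow (hs0 ω) hc0pos.le]
    rw [div_div, one_div, inv_mul_eq_div, mul_comm (2:ℝ) (c0 ^ p)]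
  -- the pointwise exponential bound
  have hptF : ∀ᵐ ω ∂P, ENNReal.ofReal (Real.exp ((τ0 ω / c0) ^ q)) ≤
      ENNReal.ofReal (Real.exp (C' + Y ω)) +
      ∑' k : ℕ, (ENNReal.ofReal (Real.exp (-(k:ℝ)-1) * Real.exp (Y ω)) +
        (B k).indicator (fun _ => ENNReal.ofReal (Real.exp (2*C k + (k:ℝ) + 1))) ω) := by
    filter_upwards [hKey] with ω hω
    obtain ⟨-, hSfin, -, hWstr⟩ := hω
    rcases hWstr with ⟨hW2, -⟩ | ⟨m, hmB, hWm, -⟩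
    · have hwω : w ω = 2 := by simp only [hw_def, hW2]; simp
      have hτ : τ0 ω = 2 / c0 * c0 * (1 + 2 * s ω) := by
        simp only [hτ0_def]; rw [hwω]; field_simp
      have harg : (τ0 ω / c0) ^ q ≤ C' + Y ω := by
        have h1 : τ0 ω / c0 = (2/c0) * (1 + 2 * s ω) := by
          rw [hτ]; field_simp
        rw [h1]
        calc ((2/c0) * (1 + 2 * s ω)) ^ q ≤ (1/(2*c0 ^ p)) * (s ω) ^ p + C' :=
            hC' (s ω) (hs0 ω)
        _ = Y ω / 2 + C' := by rw [hhalfY ω]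
        _ ≤ C' + Y ω := by linarith [hY0 ω]
      exact le_trans (ENNReal.ofReal_le_ofReal (Real.exp_le_exp.2 harg)) le_self_add
    · have hwω : w ω = 2^(m+2) := by
        simp only [hw_def, hWm]; simp [ENNReal.toReal_pow]
      have hτ : τ0 ω = 2^(m+2) * (1 + 2 * s ω) := by
        simp only [hτ0_def]; rw [hwω]; ring
      have harg : (τ0 ω / c0) ^ q ≤ C m + Y ω / 2 := by
        have h1 : τ0 ω / c0 = ((2:ℝ)^(m+2)/c0) * (1 + 2 * s ω) := by
          rw [hτ]; field_simp
        rw [h1]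
        calc ((2:ℝ)^(m+2)/c0 * (1 + 2 * s ω)) ^ q
            ≤ (1/(2*c0 ^ p)) * (s ω) ^ p + C m := hCk m (s ω) (hs0 ω)
        _ = Y ω / 2 + C m := by rw [hhalfY ω]
        _ = C m + Y ω / 2 := by ring
      have hFle : Real.exp ((τ0 ω / c0) ^ q) ≤ Real.exp (C m + Y ω / 2) :=
        Real.exp_le_exp.2 harg
      rcases le_total (Real.exp (C m + Y ω / 2)) (Real.exp (2*C m + (m:ℝ) + 1))
        with hsmall | hbig
      · have h2 : ENNReal.ofReal (Real.exp ((τ0 ω / c0) ^ q)) ≤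
            (B m).indicator (fun _ => ENNReal.ofReal (Real.exp (2*C m + (m:ℝ) + 1))) ω := by
          rw [Set.indicator_of_mem hmB]
          exact ENNReal.ofReal_le_ofReal (hFle.trans hsmall)
        refine le_trans h2 (le_trans le_add_self (le_trans (ENNReal.le_tsum m) le_add_self))
      · have h4 := Real.exp_le_exp.1 hbig
        have h3 : Real.exp (C m + Y ω / 2) ≤ Real.exp (-(m:ℝ)-1) * Real.exp (Y ω) := by
          rw [← Real.exp_add]
          apply Real.exp_le_exp.2
          linarith
        have h5 : ENNReal.ofReal (Real.exp ((τ0 ω / c0) ^ q)) ≤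
            ENNReal.ofReal (Real.exp (-(m:ℝ)-1) * Real.exp (Y ω)) :=
          ENNReal.ofReal_le_ofReal (hFle.trans h3)
        refine le_trans h5 (le_trans le_self_add (le_trans (ENNReal.le_tsum m) le_add_self))
  -- integrating the bound
  have hbasemeas : Measurable fun ω => ENNReal.ofReal (Real.exp (C' + Y ω)) :=
    ENNReal.measurable_ofReal.comp
      (Real.continuous_exp.measurable.comp (measurable_const.add hYmeas))
  have htermmeas : ∀ k : ℕ, Measurable fun ω =>
      (ENNReal.ofReal (Real.exp (-(k:ℝ)-1) * Real.exp (Y ω)) +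
        (B k).indicator (fun _ => ENNReal.ofReal (Real.exp (2*C k + (k:ℝ) + 1))) ω) := by
    intro k
    apply Measurable.add (f := fun ω => ENNReal.ofReal (Real.exp (-(k:ℝ)-1) * Real.exp (Y ω)))
      (g := fun ω => (B k).indicator (fun _ => ENNReal.ofReal (Real.exp (2*C k + (k:ℝ) + 1))) ω)
    · exact ENNReal.measurable_ofReal.comp
        ((Real.continuous_exp.measurable.comp hYmeas).const_mul _)
    · exact measurable_const.indicator (hBmeas k)
  have hint_base : ∫⁻ ω, ENNReal.ofReal (Real.exp (C' + Y ω)) ∂P ≤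
      ENNReal.ofReal (Real.exp C') * 2 := by
    have h1 : ∀ ω, ENNReal.ofReal (Real.exp (C' + Y ω)) =
        ENNReal.ofReal (Real.exp C') * ENNReal.ofReal (Real.exp (Y ω)) := by
      intro ω; rw [Real.exp_add, ENNReal.ofReal_mul (Real.exp_pos _).le]
    simp_rw [h1]
    rw [lintegral_const_mul _ hexpYmeas]
    exact mul_le_mul_right hEexp _
  have hint_term : ∀ k : ℕ, ∫⁻ ω,
      (ENNReal.ofReal (Real.exp (-(k:ℝ)-1) * Real.exp (Y ω)) +
        (B k).indicator (fun _ => ENNReal.ofReal (Real.exp (2*C k + (k:ℝ) + 1))) ω) ∂P ≤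
      3 * (ENNReal.ofReal (1/2))^k := by
    intro k
    have hmeas1 : Measurable fun ω => ENNReal.ofReal (Real.exp (-(k:ℝ)-1) * Real.exp (Y ω)) :=
      ENNReal.measurable_ofReal.comp
        ((Real.continuous_exp.measurable.comp hYmeas).const_mul _)
    rw [lintegral_add_left hmeas1]
    have h1 : ∫⁻ ω, ENNReal.ofReal (Real.exp (-(k:ℝ)-1) * Real.exp (Y ω)) ∂P ≤
        ENNReal.ofReal (Real.exp (-(k:ℝ)-1)) * 2 := by
      have h2 : ∀ ω, ENNReal.ofReal (Real.exp (-(k:ℝ)-1) * Real.exp (Y ω)) =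
          ENNReal.ofReal (Real.exp (-(k:ℝ)-1)) * ENNReal.ofReal (Real.exp (Y ω)) := by
        intro ω; rw [ENNReal.ofReal_mul (Real.exp_pos _).le]
      simp_rw [h2]
      rw [lintegral_const_mul _ hexpYmeas]
      exact mul_le_mul_right hEexp _
    have h3 : ∫⁻ ω, (B k).indicator
        (fun _ => ENNReal.ofReal (Real.exp (2*C k + (k:ℝ) + 1))) ω ∂P ≤
        ENNReal.ofReal (Real.exp (-(k:ℝ))) := by
      rw [lintegral_indicator_const (hBmeas k)]
      calc ENNReal.ofReal (Real.exp (2*C k + (k:ℝ) + 1)) * P (B k)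
          ≤ ENNReal.ofReal (Real.exp (2*C k + (k:ℝ) + 1)) * ENNReal.ofReal (ηr k) :=
            mul_le_mul_right (hPB k) _
      _ = ENNReal.ofReal (Real.exp (2*C k + (k:ℝ) + 1) * ηr k) :=
            (ENNReal.ofReal_mul (Real.exp_pos _).le).symm
      _ = ENNReal.ofReal (Real.exp (-(k:ℝ))) := by
            congr 1
            simp only [hηr_def]
            rw [← Real.exp_add]
            congr 1
            ring
    calc _ ≤ ENNReal.ofReal (Real.exp (-(k:ℝ)-1)) * 2 + ENNReal.ofReal (Real.exp (-(k:ℝ))) :=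
          add_le_add h1 h3
    _ ≤ (ENNReal.ofReal (1/2))^k * 2 + (ENNReal.ofReal (1/2))^k := by
        apply add_le_add
        · apply mul_le_mul_left
          rw [← ENNReal.ofReal_pow (by norm_num)]
          apply ENNReal.ofReal_le_ofReal
          calc Real.exp (-(k:ℝ)-1) ≤ Real.exp (-(k:ℝ)) :=
                Real.exp_le_exp.2 (by linarith)
          _ ≤ (1/2:ℝ)^k := exp_neg_nat_le k
        · rw [← ENNReal.ofReal_pow (by norm_num)]
          exact ENNReal.ofReal_le_ofReal (exp_neg_nat_le k)
    _ = 3 * (ENNReal.ofReal (1/2))^k := by ring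
  have hMfin : ∫⁻ ω, ENNReal.ofReal (Real.exp ((τ0 ω / c0) ^ q)) ∂P ≠ ∞ := by
    have h1 : ∫⁻ ω, ENNReal.ofReal (Real.exp ((τ0 ω / c0) ^ q)) ∂P ≤
        ENNReal.ofReal (Real.exp C') * 2 + ∑' k : ℕ, 3 * (ENNReal.ofReal (1/2))^k := by
      calc ∫⁻ ω, ENNReal.ofReal (Real.exp ((τ0 ω / c0) ^ q)) ∂P
          ≤ ∫⁻ ω, (ENNReal.ofReal (Real.exp (C' + Y ω)) +
            ∑' k : ℕ, (ENNReal.ofReal (Real.exp (-(k:ℝ)-1) * Real.exp (Y ω)) +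
              (B k).indicator (fun _ => ENNReal.ofReal (Real.exp (2*C k + (k:ℝ) + 1))) ω)) ∂P :=
            lintegral_mono_ae hptF
      _ = (∫⁻ ω, ENNReal.ofReal (Real.exp (C' + Y ω)) ∂P) +
            ∫⁻ ω, (∑' k : ℕ, (ENNReal.ofReal (Real.exp (-(k:ℝ)-1) * Real.exp (Y ω)) +
              (B k).indicator (fun _ => ENNReal.ofReal (Real.exp (2*C k + (k:ℝ) + 1))) ω)) ∂P :=
            lintegral_add_left hbasemeas _
      _ = (∫⁻ ω, ENNReal.ofReal (Real.exp (C' + Y ω)) ∂P) +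
            ∑' k : ℕ, ∫⁻ ω, (ENNReal.ofReal (Real.exp (-(k:ℝ)-1) * Real.exp (Y ω)) +
              (B k).indicator (fun _ => ENNReal.ofReal (Real.exp (2*C k + (k:ℝ) + 1))) ω) ∂P := by
            rw [lintegral_tsum (fun k => (htermmeas k).aemeasurable)]
      _ ≤ _ := add_le_add hint_base (ENNReal.tsum_le_tsum hint_term)
    refine ne_top_of_le_ne_top ?_ h1
    rw [ENNReal.tsum_mul_left, ENNReal.tsum_geometric]
    exact ENNReal.add_ne_top.2 ⟨ENNReal.mul_ne_top ENNReal.ofReal_ne_top ENNReal.ofNat_ne_top,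
      ENNReal.mul_ne_top (by norm_num) hinvfin⟩
  -- dominated convergence: some large ball works
  have hθcont : Continuous (ThetaOrlicz q) := by
    unfold ThetaOrlicz
    exact (Real.continuous_exp.comp
      (continuous_abs.rpow_const (fun x => Or.inr hq.le))).sub continuous_const
  have hDCT : ∃ cb : ℝ, 0 < cb ∧
      ∫⁻ ω, ENNReal.ofReal (ThetaOrlicz q (|τ0 ω| / cb)) ∂P ≤ 1 := by
    have hFnmeas : ∀ n : ℕ, Measurable fun ω =>
        ENNReal.ofReal (ThetaOrlicz q (|τ0 ω| / (c0 + n))) := by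
      intro n
      exact ENNReal.measurable_ofReal.comp
        (hθcont.measurable.comp (hτ0meas.abs.div_const _))
    have hdom : ∀ n : ℕ, (fun ω => ENNReal.ofReal (ThetaOrlicz q (|τ0 ω| / (c0 + n)))) ≤ᵐ[P]
        fun ω => ENNReal.ofReal (Real.exp ((τ0 ω / c0) ^ q)) := by
      intro n
      apply Filter.Eventually.of_forall
      intro ω
      apply ENNReal.ofReal_le_ofReal
      have h1 : ThetaOrlicz q (|τ0 ω| / (c0 + n)) ≤
          Real.exp (|(|τ0 ω| / (c0 + n))| ^ q) := by
        unfold ThetaOrlicz; linarith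
      refine h1.trans (Real.exp_le_exp.2 ?_)
      have hcn : (0:ℝ) < c0 + n := by positivity
      apply Real.rpow_le_rpow (abs_nonneg _) ?_ hq.le
      rw [abs_of_nonneg (div_nonneg (abs_nonneg _) hcn.le), abs_of_nonneg (hτ0nonneg ω)]
      apply div_le_div_of_nonneg_left (hτ0nonneg ω) hc0pos
      simp
    have htendae : ∀ᵐ ω ∂P, Tendsto
        (fun n : ℕ => ENNReal.ofReal (ThetaOrlicz q (|τ0 ω| / (c0 + n)))) atTop (nhds 0) := by
      apply Filter.Eventually.of_forall
      intro ω
      have h1 : Tendsto (fun n : ℕ => |τ0 ω| / (c0 + n)) atTop (nhds 0) := by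
        apply Tendsto.div_atTop tendsto_const_nhds
        exact tendsto_atTop_add_const_left _ _ tendsto_natCast_atTop_atTop
      have h2 : Tendsto (fun n : ℕ => ThetaOrlicz q (|τ0 ω| / (c0 + n))) atTop
          (nhds (ThetaOrlicz q 0)) := (hθcont.tendsto 0).comp h1
      have h3 : ThetaOrlicz q 0 = 0 := by
        unfold ThetaOrlicz; rw [abs_zero, Real.zero_rpow hq.ne', Real.exp_zero]; ring
      rw [h3] at h2
      have h4 := ENNReal.tendsto_ofReal h2
      rwa [ENNReal.ofReal_zero] at h4
    have hlim := tendsto_lintegral_of_dominated_convergence _ hFnmeas hdom hMfin htendae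
    rw [lintegral_zero] at hlim
    have hev := hlim.eventually (gt_mem_nhds zero_lt_one)
    obtain ⟨n, hn⟩ := hev.exists
    exact ⟨c0 + n, by positivity, hn.le⟩
  obtain ⟨cb, hcbpos, hcbint⟩ := hDCT
  have hNfin : luxNorm P (ThetaOrlicz q) τ0 ≠ ∞ := by
    have hmemcb : ENNReal.ofReal cb ∈ {c : ℝ≥0∞ | 0 < c ∧ c ≠ ∞ ∧
        ∫⁻ ω, ENNReal.ofReal (ThetaOrlicz q (|τ0 ω| / c.toReal)) ∂P ≤ 1} := by
      refine ⟨ENNReal.ofReal_pos.2 hcbpos, ENNReal.ofReal_ne_top, ?_⟩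
      rwa [ENNReal.toReal_ofReal hcbpos.le]
    exact ne_top_of_le_ne_top ENNReal.ofReal_ne_top (sInf_le hmemcb)
  have hge2 : ∀ᵐ ω ∂P, 2 ≤ τ0 ω := by
    filter_upwards [hKey] with ω hω
    obtain ⟨-, -, -, hWstr⟩ := hω
    have hwge : 2 ≤ w ω := by
      rcases hWstr with ⟨hW2, -⟩ | ⟨m, -, hWm, -⟩
      · simp only [hw_def, hW2]; simp
      · simp only [hw_def, hWm]
        rw [ENNReal.toReal_pow, ENNReal.toReal_ofNat]
        calc (2:ℝ) = 2^1 := (pow_one 2).symm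
        _ ≤ 2^(m+2) := pow_le_pow_right₀ one_le_two (by omega)
    simp only [hτ0_def]
    nlinarith [hs0 ω]
  set N := luxNorm P (ThetaOrlicz q) τ0 with hN_def
  have hN0 : 0 < N := by
    refine lt_of_lt_of_le ?_ (lux_lower P hq hge2)
    apply ENNReal.ofReal_pos.2
    have : (0:ℝ) < (Real.log 2) ^ q⁻¹ := Real.rpow_pos_of_pos (Real.log_pos one_lt_two) _
    positivity
  have hNr : 0 < N.toReal := ENNReal.toReal_pos hN0.ne' hNfin
  have hluxτ := lux_div_eq_one P hq hτ0nonneg hge2 hNfin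
  -- assemble the answer
  refine ⟨fun δ => N.toReal * g0 δ, fun ω => τ0 ω / N.toReal, ?_,
    hτ0meas.div_const _,
    fun ω => div_nonneg (hτ0nonneg ω) ENNReal.toReal_nonneg, hluxτ, ?_⟩
  · refine ⟨(continuous_const.mul hg0cont).continuousOn,
      fun δ _ => mul_nonneg ENNReal.toReal_nonneg (hg0nonneg δ), ?_, by show N.toReal * g0 0 = 0; rw [hg00, mul_zero]⟩
    intro a _ b _ hab
    exact mul_le_mul_of_nonneg_left (hg0mono hab) ENNReal.toReal_nonneg
  · filter_upwards [hKey] with ω hω δ hδ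
    obtain ⟨hcω, hSfin, -, hWstr⟩ := hω
    obtain ⟨hδ0, hδD⟩ := hδ
    have hM2fin : ∀ δ' : ℝ, Minf δ' ω ≠ ∞ := fun δ' =>
      ne_top_of_le_ne_top (ENNReal.mul_ne_top ENNReal.ofNat_ne_top hSfin) (hMleS δ' ω)
    have hMle2s : ∀ δ' : ℝ, (Minf δ' ω).toReal ≤ 2 * s ω := by
      intro δ'
      have h1 := ENNReal.toReal_mono (ENNReal.mul_ne_top ENNReal.ofNat_ne_top hSfin)
        (hMleS δ' ω)
      rwa [ENNReal.toReal_mul, ENNReal.toReal_ofNat] at h1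
    have hwge2 : 2 ≤ w ω := by
      rcases hWstr with ⟨hW2, -⟩ | ⟨m, -, hWm, -⟩
      · simp only [hw_def, hW2]; simp
      · simp only [hw_def, hWm]
        rw [ENNReal.toReal_pow, ENNReal.toReal_ofNat]
        calc (2:ℝ) = 2^1 := (pow_one 2).symm
        _ ≤ 2^(m+2) := pow_le_pow_right₀ one_le_two (by omega)
    have hwB : ∀ k, ω ∈ B k → (2:ℝ)^(k+2) ≤ w ω := by
      intro k hk
      rcases hWstr with ⟨-, hnone⟩ | ⟨m, -, hWm, hmax⟩
      · exact absurd hk (hnone k)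
      · simp only [hw_def, hWm]
        rw [ENNReal.toReal_pow, ENNReal.toReal_ofNat]
        exact pow_le_pow_right₀ one_le_two (by have := hmax k hk; omega)
    have hgoal : modCont (fun x => ξ x ω) δ ≤ τ0 ω * g0 δ := by
      rcases eq_or_lt_of_le hδ0 with heq | hpos
      · rw [← heq]
        have h0 : modCont (fun x => ξ x ω) 0 ≤ 0 := by
          apply Real.sSup_le _ le_rfl
          rintro r ⟨x, y, hxy, rfl⟩
          have hxy2 : x = y := dist_le_zero.1 hxy
          rw [hxy2, sub_self, abs_zero]
        rw [hg00, mul_zero]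
        exact h0
      · have h1p2s : (1:ℝ) ≤ 1 + 2 * s ω := by nlinarith [hs0 ω]
        have hwnn : (0:ℝ) ≤ w ω := ENNReal.toReal_nonneg
        by_cases hcase : d 0 ≤ δ
        · have hm := hKL ω hcω δ (δ+1) (by linarith) (hM2fin _)
          have h2 := hMle2s (δ+1)
          have h3 : (1/2:ℝ)^(0+1) ≤ g0 δ := hg0lb 0 δ hcase
          norm_num at h3
          have h4 : 2 * s ω ≤ τ0 ω * g0 δ := by
            simp only [hτ0_def]
            have h5 : (1:ℝ) ≤ w ω * g0 δ := by nlinarith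
            nlinarith [hs0 ω]
          linarith
        · push_neg at hcase
          have hρ : ∃ n, d n ≤ δ := by
            obtain ⟨n, hn⟩ := exists_pow_lt_of_lt_one
              (div_pos hpos (hdpos 0)) (by norm_num : (1/2:ℝ) < 1)
            refine ⟨n, ?_⟩
            have h6 := hddecay n
            rw [lt_div_iff₀ (hdpos 0)] at hn
            nlinarith [hdpos 0]
          have hK1 : d (Nat.find hρ) ≤ δ := Nat.find_spec hρ
          have hKne : Nat.find hρ ≠ 0 := by
            intro h0
            rw [h0] at hK1
            linarith
          obtain ⟨k, hkeq⟩ := Nat.exists_eq_succ_of_ne_zero hKne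
          have hk1 : d (k+1) ≤ δ := by rw [← Nat.succ_eq_add_one, ← hkeq]; exact hK1
          have hk2 : δ < d k := by
            have h7 := Nat.find_min hρ (m := k) (by omega)
            linarith [not_le.1 h7]
          have hg0δ : (1/2:ℝ)^(k+2) ≤ g0 δ := hg0lb (k+1) δ hk1
          have hmod := hKL ω hcω δ (d k) hk2 (hM2fin _)
          by_cases hBk : ω ∈ B k
          · have h2 := hMle2s (d k)
            have h3 : (2:ℝ)^(k+2) ≤ w ω := hwB k hBk
            have h4 : (1:ℝ) ≤ w ω * g0 δ := by
              have h5 : (2:ℝ)^(k+2) * (1/2:ℝ)^(k+2) = 1 := by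
                rw [← mul_pow]; norm_num
              calc (1:ℝ) = (2:ℝ)^(k+2) * (1/2:ℝ)^(k+2) := h5.symm
              _ ≤ w ω * g0 δ :=
                  mul_le_mul h3 hg0δ (by positivity) hwnn
            have h6 : 2 * s ω ≤ τ0 ω * g0 δ := by
              simp only [hτ0_def]
              calc 2 * s ω ≤ 1 + 2 * s ω := by linarith
              _ = (1 + 2*s ω) * 1 := by ring
              _ ≤ (1 + 2*s ω) * (w ω * g0 δ) :=
                  mul_le_mul_of_nonneg_left h4 (by linarith)
              _ = (1 + 2*s ω) * w ω * g0 δ := by ring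
            linarith
          · have h2 : Minf (d k) ω ≤ ENNReal.ofReal ((1/2:ℝ)^(k+1)) := not_lt.1 hBk
            have h3 : (Minf (d k) ω).toReal ≤ (1/2:ℝ)^(k+1) := by
              have h8 := ENNReal.toReal_mono ENNReal.ofReal_ne_top h2
              rwa [ENNReal.toReal_ofReal (by positivity)] at h8
            have h4 : 2 ≤ τ0 ω := by
              simp only [hτ0_def]
              nlinarith [hs0 ω]
            have h5 : (1/2:ℝ)^(k+1) ≤ τ0 ω * g0 δ := by
              have h6 : (1/2:ℝ)^(k+1) = 2 * (1/2:ℝ)^(k+2) := by ring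
              rw [h6]
              exact mul_le_mul h4 hg0δ (by positivity) (by linarith)
            linarith
    have hconv : (τ0 ω / N.toReal) * (N.toReal * g0 δ) = τ0 ω * g0 δ := by
      field_simp
    calc modCont (fun x => ξ x ω) δ ≤ τ0 ω * g0 δ := hgoal
    _ = (τ0 ω / N.toReal) * (N.toReal * g0 δ) := hconv.symm
end

section
/- Let D = [0,1]^d and let ξ = ξ(x,ω), x ∈ D, be a jointly measurable random field with almost surely continuous sample paths. Let Φ be an Orlicz function and Ψ an Orlicz function weaker than Φ, and suppose that γ(δ⃗) := ‖Ω(ξ, δ⃗)‖_Φ is finite for all δ⃗ ∈ [0,1]^d and γ(δ⃗) → 0 as ‖δ⃗‖ → 0. Then ξ is rectangle factorably continuous: there exist a non-negative random variable ν with ‖ν‖_Ψ = 1 and a non-random continuous function g : [0,1]^d → [0,∞) with g(δ⃗) → 0 as ‖δ⃗‖ → 0 such that, almost surely, Ω(ξ(·,ω), δ⃗) ≤ ν(ω) · g(δ⃗) for every δ⃗ ∈ [0,1]^d. -/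
open MeasureTheory Filter Set
open scoped ENNReal NNReal

/-- The rectangle difference operator
`□[f](x,y) = Σ_{S ⊆ {1,…,d}} (-1)^{d - |S|} f(z^S)`, where `z^S_i = y_i` for `i ∈ S`
and `z^S_i = x_i` otherwise. -/
noncomputable def boxDiff {d : ℕ} (f : (Fin d → ℝ) → ℝ) (x y : Fin d → ℝ) : ℝ :=
  ∑ S : Finset (Fin d), (-1 : ℝ) ^ (d - S.card) * f fun i => if i ∈ S then y i else x i

/-- The rectangle modulus of continuity `Ω(f, δ⃗)` of `f` on the cube `[0,1]^d`. -/
noncomputable def rectMod {d : ℕ} (f : (Fin d → ℝ) → ℝ) (δ : Fin d → ℝ) : ℝ :=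
  sSup {r : ℝ | ∃ x y : Fin d → ℝ,
    x ∈ Set.Icc (0 : Fin d → ℝ) 1 ∧ y ∈ Set.Icc (0 : Fin d → ℝ) 1 ∧
    (∀ i, |x i - y i| ≤ δ i) ∧ r = |boxDiff f x y|}

private lemma sInf_mul_image_le (k : ℝ≥0∞) (S : Set ℝ≥0∞) :
    k * sInf S ≤ sInf ((fun c => k * c) '' S) := by
  refine le_sInf ?_
  rintro c ⟨e, he, rfl⟩
  exact mul_le_mul_right (sInf_le he) k

private lemma ennreal_sInf_mul {k : ℝ≥0∞} (hk0 : k ≠ 0) (hk : k ≠ ∞) (S : Set ℝ≥0∞) :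
    sInf ((fun c => k * c) '' S) = k * sInf S := by
  refine le_antisymm ?_ (sInf_mul_image_le k S)
  have h2 := sInf_mul_image_le k⁻¹ ((fun c => k * c) '' S)
  have himg : (fun c => k⁻¹ * c) '' ((fun c => k * c) '' S) = S := by
    rw [← Set.image_comp]
    have : ((fun c => k⁻¹ * c) ∘ (fun c => k * c)) = id := by
      funext c
      simp [Function.comp, ← mul_assoc, ENNReal.inv_mul_cancel hk0 hk]
    rw [this, Set.image_id]
  rw [himg] at h2
  calc sInf ((fun c => k * c) '' S) = k * (k⁻¹ * sInf ((fun c => k * c) '' S)) := by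
        rw [← mul_assoc, ENNReal.mul_inv_cancel hk0 hk, one_mul]
    _ ≤ k * sInf S := mul_le_mul_right h2 k

private lemma luxNorm_const_mul {Ω : Type*} [MeasurableSpace Ω] (P : Measure Ω)
    (Ψ : ℝ → ℝ) (ζ : Ω → ℝ) {k : ℝ} (hk : 0 < k) :
    luxNorm P Ψ (fun ω => k * ζ ω) = ENNReal.ofReal k * luxNorm P Ψ ζ := by
  have hk0 : ENNReal.ofReal k ≠ 0 := by simp [hk, le_of_lt]
  have hktop : ENNReal.ofReal k ≠ ∞ := ENNReal.ofReal_ne_top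
  rw [luxNorm, luxNorm, ← ennreal_sInf_mul hk0 hktop]
  congr 1
  ext c
  constructor
  · rintro ⟨hc0, hctop, hint⟩
    refine ⟨c / ENNReal.ofReal k, ⟨?_, ?_, ?_⟩, ?_⟩
    · exact ENNReal.div_pos hc0.ne' hktop
    · exact (ENNReal.div_lt_top hctop hk0).ne
    · have hct : 0 < c.toReal := ENNReal.toReal_pos hc0.ne' hctop
      convert hint using 1
      refine lintegral_congr fun ω => ?_
      rw [ENNReal.toReal_div, ENNReal.toReal_ofReal hk.le]
      congr 1
      rw [abs_mul, abs_of_pos hk]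
      rw [div_div_eq_mul_div, mul_comm]
    · exact ENNReal.mul_div_cancel hk0 hktop
  · rintro ⟨e, ⟨he0, hetop, hint⟩, rfl⟩
    refine ⟨?_, ?_, ?_⟩
    · exact ENNReal.mul_pos hk0 he0.ne'
    · exact ENNReal.mul_ne_top hktop hetop
    · have het : 0 < e.toReal := ENNReal.toReal_pos he0.ne' hetop
      convert hint using 1
      refine lintegral_congr fun ω => ?_
      rw [ENNReal.toReal_mul, ENNReal.toReal_ofReal hk.le]
      congr 1
      rw [abs_mul, abs_of_pos hk, mul_div_mul_left _ _ hk.ne']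

/-- The admissible pairs for the rectangle modulus. -/
def Apairs (d : ℕ) (δ : Fin d → ℝ) : Set ((Fin d → ℝ) × (Fin d → ℝ)) :=
  {p | p.1 ∈ Set.Icc (0 : Fin d → ℝ) 1 ∧ p.2 ∈ Set.Icc (0 : Fin d → ℝ) 1 ∧
    ∀ i, |p.1 i - p.2 i| ≤ δ i}

lemma rectMod_eq_sSup_image {d : ℕ} (f : (Fin d → ℝ) → ℝ) (δ : Fin d → ℝ) :
    rectMod f δ = sSup ((fun p : (Fin d → ℝ) × (Fin d → ℝ) =>
      |boxDiff f p.1 p.2|) '' Apairs d δ) := by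
  unfold rectMod
  congr 1
  ext r
  constructor
  · rintro ⟨x, y, hx, hy, hxy, rfl⟩
    exact ⟨(x, y), ⟨hx, hy, hxy⟩, rfl⟩
  · rintro ⟨⟨x, y⟩, ⟨hx, hy, hxy⟩, rfl⟩
    exact ⟨x, y, hx, hy, hxy, rfl⟩

lemma apairs_nonempty {d : ℕ} {δ : Fin d → ℝ} (hδ : ∀ i, 0 ≤ δ i) :
    (Apairs d δ).Nonempty := by
  refine ⟨(0, 0), ⟨?_, ?_, fun i => by simpa using hδ i⟩⟩ <;>
  · rw [Set.mem_Icc]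
    exact ⟨le_refl _, fun i => zero_le_one⟩

lemma apairs_mono {d : ℕ} {δ δ' : Fin d → ℝ} (h : ∀ i, δ i ≤ δ' i) :
    Apairs d δ ⊆ Apairs d δ' := by
  rintro ⟨x, y⟩ ⟨hx, hy, hxy⟩
  exact ⟨hx, hy, fun i => (hxy i).trans (h i)⟩

/-- the substitution map `z^S`. -/
def zmap {d : ℕ} (S : Finset (Fin d)) (p : (Fin d → ℝ) × (Fin d → ℝ)) : Fin d → ℝ :=
  fun i => if i ∈ S then p.2 i else p.1 i

lemma continuous_zmap {d : ℕ} (S : Finset (Fin d)) : Continuous (zmap S) := by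
  refine continuous_pi fun i => ?_
  by_cases h : i ∈ S <;> simp only [zmap, h, if_true, if_false]
  · exact (continuous_apply i).comp continuous_snd
  · exact (continuous_apply i).comp continuous_fst

lemma zmap_mem {d : ℕ} (S : Finset (Fin d)) {p : (Fin d → ℝ) × (Fin d → ℝ)}
    (hx : p.1 ∈ Set.Icc (0 : Fin d → ℝ) 1) (hy : p.2 ∈ Set.Icc (0 : Fin d → ℝ) 1) :
    zmap S p ∈ Set.Icc (0 : Fin d → ℝ) 1 := by
  rw [Set.mem_Icc] at *
  constructor <;> intro i <;> by_cases h : i ∈ S <;> simp only [zmap, h, if_true, if_false]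
  · exact hy.1 i
  · exact hx.1 i
  · exact hy.2 i
  · exact hx.2 i

lemma boxDiff_eq_zmap {d : ℕ} (f : (Fin d → ℝ) → ℝ) (x y : Fin d → ℝ) :
    boxDiff f x y = ∑ S : Finset (Fin d), (-1 : ℝ) ^ (d - S.card) * f (zmap S (x, y)) := rfl

lemma abs_boxDiff_le {d : ℕ} {f : (Fin d → ℝ) → ℝ} {M : ℝ}
    (hM : ∀ x ∈ Set.Icc (0 : Fin d → ℝ) 1, |f x| ≤ M)
    {x y : Fin d → ℝ} (hx : x ∈ Set.Icc (0 : Fin d → ℝ) 1)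
    (hy : y ∈ Set.Icc (0 : Fin d → ℝ) 1) :
    |boxDiff f x y| ≤ (2 ^ d : ℝ) * M := by
  rw [boxDiff_eq_zmap]
  calc |∑ S : Finset (Fin d), (-1 : ℝ) ^ (d - S.card) * f (zmap S (x, y))|
      ≤ ∑ S : Finset (Fin d), |(-1 : ℝ) ^ (d - S.card) * f (zmap S (x, y))| :=
        Finset.abs_sum_le_sum_abs _ _
    _ ≤ ∑ _S : Finset (Fin d), M := by
        refine Finset.sum_le_sum fun S _ => ?_
        rw [abs_mul, abs_pow, abs_neg, abs_one, one_pow, one_mul]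
        exact hM _ (zmap_mem S hx hy)
    _ = (2 ^ d : ℝ) * M := by
        rw [Finset.sum_const]
        simp [Finset.card_univ]

lemma bddAbove_rectSet {d : ℕ} {f : (Fin d → ℝ) → ℝ}
    (hf : ContinuousOn f (Set.Icc (0 : Fin d → ℝ) 1)) (δ : Fin d → ℝ) :
    BddAbove ((fun p : (Fin d → ℝ) × (Fin d → ℝ) => |boxDiff f p.1 p.2|) '' Apairs d δ) := by
  obtain ⟨M, hM⟩ := isCompact_Icc.exists_bound_of_continuousOn hf
  refine ⟨(2 ^ d : ℝ) * M, ?_⟩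
  rintro r ⟨⟨x, y⟩, ⟨hx, hy, _⟩, rfl⟩
  exact abs_boxDiff_le (fun z hz => hM z hz) hx hy

lemma rectMod_nonneg_of_cont {d : ℕ} {f : (Fin d → ℝ) → ℝ}
    (hf : ContinuousOn f (Set.Icc (0 : Fin d → ℝ) 1)) {δ : Fin d → ℝ}
    (hδ : ∀ i, 0 ≤ δ i) : 0 ≤ rectMod f δ := by
  rw [rectMod_eq_sSup_image]
  obtain ⟨p, hp⟩ := apairs_nonempty hδ
  exact le_csSup_of_le (bddAbove_rectSet hf δ) ⟨p, hp, rfl⟩ (abs_nonneg _)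

lemma rectMod_mono_of_cont {d : ℕ} {f : (Fin d → ℝ) → ℝ}
    (hf : ContinuousOn f (Set.Icc (0 : Fin d → ℝ) 1)) {δ δ' : Fin d → ℝ}
    (hδ : ∀ i, 0 ≤ δ i) (h : ∀ i, δ i ≤ δ' i) : rectMod f δ ≤ rectMod f δ' := by
  rw [rectMod_eq_sSup_image, rectMod_eq_sSup_image]
  refine csSup_le_csSup (bddAbove_rectSet hf δ') ?_ (Set.image_mono (apairs_mono h))
  exact ((apairs_nonempty hδ).image _)

/-- continuity of `|boxDiff f ·|` on the subtype of admissible pairs. -/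
lemma continuous_absBoxDiff_subtype {d : ℕ} {f : (Fin d → ℝ) → ℝ}
    (hf : ContinuousOn f (Set.Icc (0 : Fin d → ℝ) 1)) (δ : Fin d → ℝ) :
    Continuous fun p : ↥(Apairs d δ) => |boxDiff f p.val.1 p.val.2| := by
  refine Continuous.abs ?_
  have : (fun p : ↥(Apairs d δ) => boxDiff f p.val.1 p.val.2)
      = fun p : ↥(Apairs d δ) => ∑ S : Finset (Fin d),
        (-1 : ℝ) ^ (d - S.card) * (f ∘ (fun p : ↥(Apairs d δ) => zmap S p.val)) p := rfl
  rw [this]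
  refine continuous_finset_sum _ fun S _ => Continuous.mul continuous_const ?_
  refine hf.comp_continuous ((continuous_zmap S).comp continuous_subtype_val) fun p => ?_
  exact zmap_mem S p.2.1 p.2.2.1

lemma orlicz_monotoneOn {Ψ : ℝ → ℝ} (hΨ : IsOrliczFunction Ψ) :
    MonotoneOn Ψ (Set.Ici 0) := hΨ.strictMonoOn.monotoneOn

lemma orlicz_pos {Φ : ℝ → ℝ} (hΦ : IsOrliczFunction Φ) {u : ℝ} (hu : 0 < u) : 0 < Φ u := by
  have := hΦ.strictMonoOn (Set.self_mem_Ici) (le_of_lt hu) hu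
  rwa [hΦ.map_zero] at this

lemma orlicz_small {Ψ : ℝ → ℝ} (hΨ : IsOrliczFunction Ψ) {e : ℝ} (he : 0 < e) :
    ∃ s > 0, Ψ s ≤ e := by
  have hc : Tendsto Ψ (nhds 0) (nhds 0) := by
    simpa [hΨ.map_zero] using hΨ.continuous.tendsto 0
  have h2 : ∀ᶠ u in nhds (0 : ℝ), Ψ u < e := hc.eventually_lt_const he
  rw [Metric.eventually_nhds_iff] at h2
  obtain ⟨ε, hε, h⟩ := h2
  refine ⟨ε / 2, by positivity, (h ?_).le⟩
  rw [Real.dist_eq, sub_zero, abs_of_pos (by positivity)]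
  linarith

lemma orlicz_large {Ψ Φ : ℝ → ℝ} (hΦ : IsOrliczFunction Φ)
    (hweak : OrliczWeaker Ψ Φ) {e : ℝ} (he : 0 < e) :
    ∃ u ≥ 1, ∀ v ≥ u, Ψ v ≤ e * Φ v := by
  have h := hweak 1 one_pos
  simp only [mul_one] at h
  have h2 : ∀ᶠ v in atTop, Ψ v / Φ v < e := h.eventually_lt_const he
  rw [eventually_atTop] at h2
  obtain ⟨u0, hu0⟩ := h2
  refine ⟨max u0 1, le_max_right _ _, fun v hv => ?_⟩
  have hv1 : (1 : ℝ) ≤ v := le_trans (le_max_right u0 1) hv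
  have hΦv : 0 < Φ v := orlicz_pos hΦ (lt_of_lt_of_le one_pos hv1)
  have hr := hu0 v (le_trans (le_max_left u0 1) hv)
  calc Ψ v = Ψ v / Φ v * Φ v := by field_simp
    _ ≤ e * Φ v := mul_le_mul_of_nonneg_right hr.le hΦv.le

    
lemma orlicz_key {Ψ Φ : ℝ → ℝ} (hΨ : IsOrliczFunction Ψ) (hΦ : IsOrliczFunction Φ)
    {e s u b M x : ℝ} (he : 0 ≤ e) (hs : 0 < s) (hu : 1 ≤ u) (hΨs : Ψ s ≤ e)
    (hlarge : ∀ v ≥ u, Ψ v ≤ e * Φ v) (hM1 : 1 ≤ M) (hMus : u / s ≤ M)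
    (hb : 0 < b) (hx : 0 ≤ x) :
    Ψ (x / (b * M)) ≤ e * (1 + Φ (x / b)) := by
  have hM0 : 0 < M := lt_of_lt_of_le one_pos hM1
  set w := x / b with hw
  have hw0 : 0 ≤ w := div_nonneg hx hb.le
  have hxbM : x / (b * M) = w / M := by rw [hw, div_div]
  rw [hxbM]
  have hwM0 : 0 ≤ w / M := div_nonneg hw0 hM0.le
  rcases le_or_gt w u with hcase | hcase
  · have hu0 : 0 < u := lt_of_lt_of_le one_pos hu
    have h1 : w / M ≤ s := by
      have hMinv : M⁻¹ ≤ s / u := by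
        rw [← inv_div u s]
        exact inv_anti₀ (div_pos hu0 hs) hMus
      calc w / M = w * M⁻¹ := div_eq_mul_inv w M
        _ ≤ w * (s / u) := mul_le_mul_of_nonneg_left hMinv hw0
        _ ≤ u * (s / u) := mul_le_mul_of_nonneg_right hcase (div_pos hs hu0).le
        _ = s := by field_simp
    have h2 : Ψ (w / M) ≤ Ψ s := orlicz_monotoneOn hΨ hwM0 hs.le h1
    have h3 : (0 : ℝ) ≤ Φ w := hΦ.nonneg w
    nlinarith
  · have h1 : w / M ≤ w := div_le_self hw0 hM1
    have h2 : Ψ (w / M) ≤ Ψ w := orlicz_monotoneOn hΨ hwM0 hw0 h1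
    have h3 := hlarge w hcase.le
    have h4 : (0 : ℝ) ≤ Φ w := hΦ.nonneg w
    nlinarith


private lemma measurable_section {d : ℕ} {Ω' : Type*} [MeasurableSpace Ω']
    {ξ : (Fin d → ℝ) → Ω' → ℝ} (hmeas : Measurable fun z : (Fin d → ℝ) × Ω' => ξ z.1 z.2)
    (p : Fin d → ℝ) : Measurable fun ω => ξ p ω :=
  hmeas.comp measurable_prodMk_left

private lemma measurable_boxDiff {d : ℕ} {Ω' : Type*} [MeasurableSpace Ω']
    {ξ : (Fin d → ℝ) → Ω' → ℝ} (hmeas : Measurable fun z : (Fin d → ℝ) × Ω' => ξ z.1 z.2)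
    (x y : Fin d → ℝ) : Measurable fun ω => boxDiff (fun z => ξ z ω) x y := by
  unfold boxDiff
  exact Finset.measurable_sum _ fun S _ =>
    measurable_const.mul (measurable_section hmeas _)

set_option maxHeartbeats 1000000 in
/-- rectangle factorable continuity of a random field on `[0,1]^d`:
if `γ(δ⃗) = ‖Ω(ξ,δ⃗)‖_Φ` is finite and tends to `0`, then `Ω(ξ(·,ω), δ⃗) ≤ ν(ω) · g(δ⃗)`
with `‖ν‖_Ψ = 1` for any Orlicz function `Ψ` weaker than `Φ`. -/
theorem rectangle_factorable_continuity
    {Ω' : Type*} [MeasurableSpace Ω'] (P : Measure Ω') [IsProbabilityMeasure P]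
    (d : ℕ) (ξ : (Fin d → ℝ) → Ω' → ℝ)
    (hmeas : Measurable fun z : (Fin d → ℝ) × Ω' => ξ z.1 z.2)
    (hcont : ∀ᵐ ω ∂P, ContinuousOn (fun x => ξ x ω) (Set.Icc (0 : Fin d → ℝ) 1))
    (Φ Ψ : ℝ → ℝ) (hΦ : IsOrliczFunction Φ) (hΨ : IsOrliczFunction Ψ)
    (hweak : OrliczWeaker Ψ Φ)
    (hγfin : ∀ δ ∈ Set.Icc (0 : Fin d → ℝ) 1,
      luxNorm P Φ (fun ω => rectMod (fun x => ξ x ω) δ) < ∞)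
    (hγ0 : Filter.Tendsto
      (fun δ : Fin d → ℝ => luxNorm P Φ (fun ω => rectMod (fun x => ξ x ω) δ))
      (nhdsWithin 0 (Set.Icc (0 : Fin d → ℝ) 1)) (nhds 0)) :
    ∃ (ν : Ω' → ℝ) (g : (Fin d → ℝ) → ℝ),
      Measurable ν ∧ (∀ ω, 0 ≤ ν ω) ∧ luxNorm P Ψ ν = 1 ∧
      ContinuousOn g (Set.Icc (0 : Fin d → ℝ) 1) ∧
      (∀ δ ∈ Set.Icc (0 : Fin d → ℝ) 1, 0 ≤ g δ) ∧
      Filter.Tendsto g (nhdsWithin 0 (Set.Icc (0 : Fin d → ℝ) 1)) (nhds 0) ∧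
      ∀ᵐ ω ∂P, ∀ δ ∈ Set.Icc (0 : Fin d → ℝ) 1,
        rectMod (fun x => ξ x ω) δ ≤ ν ω * g δ := by
  classical
  -- notation
  set ζ : (Fin d → ℝ) → Ω' → ℝ := fun δ ω => rectMod (fun x => ξ x ω) δ with hζdef
  set γ : (Fin d → ℝ) → ℝ≥0∞ := fun δ => luxNorm P Φ (ζ δ) with hγdef
  -- Orlicz constants
  obtain ⟨A0, hA01, hA0pos⟩ : ∃ a : ℝ, 1 ≤ Ψ a ∧ 0 < a :=
    ((hΨ.tendsto_atTop.eventually_ge_atTop 1).and (eventually_gt_atTop 0)).exists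
  obtain ⟨κ, hκpos, hκhalf⟩ : ∃ s > 0, Ψ s ≤ 1 / 2 :=
    orlicz_small hΨ (by norm_num)
  set ε : ℕ → ℝ := fun n => (1 / 2 : ℝ) ^ (n + 3) with hεdef
  have hεpos : ∀ n, 0 < ε n := fun n => by positivity
  choose s hspos hsΨ using fun n => orlicz_small hΨ (hεpos n)
  choose u hu1 hular using fun n => orlicz_large hΦ hweak (hεpos n)
  set M : ℕ → ℝ := fun n => max 1 (u n / s n) with hMdef
  have hM1 : ∀ n, 1 ≤ M n := fun n => le_max_left _ _
  have hMus : ∀ n, u n / s n ≤ M n := fun n => le_max_right _ _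
  have hMpos : ∀ n, 0 < M n := fun n => lt_of_lt_of_le one_pos (hM1 n)
  -- radii from hγ0
  have hrad : ∀ e : ℝ≥0∞, 0 < e → ∃ r > 0,
      ∀ δ ∈ Set.Icc (0 : Fin d → ℝ) 1, ‖δ‖ < r → γ δ < e := by
    intro e he
    have hIio : Set.Iio e ∈ nhds (0 : ℝ≥0∞) := isOpen_Iio.mem_nhds he
    have hpre := hγ0 hIio
    rw [Filter.mem_map, Metric.mem_nhdsWithin_iff] at hpre
    obtain ⟨r, hr, hsub⟩ := hpre
    refine ⟨r, hr, fun δ hδ hlt => hsub ⟨?_, hδ⟩⟩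
    rwa [Metric.mem_ball, dist_zero_right]
  set β : ℕ → ℝ≥0∞ := fun n => ENNReal.ofReal ((1 / 2) ^ n / M n) with hβdef
  have hβpos : ∀ n, 0 < β n := fun n =>
    ENNReal.ofReal_pos.mpr (div_pos (by positivity) (hMpos n))
  choose r hrpos hrprop using fun n => hrad (β n) (hβpos n)
  -- the scale sequence t
  set t : ℕ → ℝ := fun n => Nat.rec 1 (fun m tm => min (tm / 2) (r (m + 1) / 2)) n with htdef
  have ht0 : t 0 = 1 := rfl
  have htsucc : ∀ n, t (n + 1) = min (t n / 2) (r (n + 1) / 2) := fun n => rfl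
  have htpos : ∀ n, 0 < t n := by
    intro n
    induction n with
    | zero => rw [ht0]; exact one_pos
    | succ m ih => rw [htsucc m]; exact lt_min (by linarith) (by linarith [hrpos (m + 1)])
  have htle : ∀ n, t n ≤ (1 / 2) ^ n := by
    intro n
    induction n with
    | zero => rw [ht0]; norm_num
    | succ m ih =>
      rw [htsucc m]
      calc min (t m / 2) (r (m + 1) / 2) ≤ t m / 2 := min_le_left _ _
        _ ≤ (1 / 2) ^ m / 2 := by linarith
        _ = (1 / 2) ^ (m + 1) := by rw [pow_succ]; ring
  have htle1 : ∀ n, t n ≤ 1 := fun n =>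
    (htle n).trans (pow_le_one₀ (by norm_num) (by norm_num))
  have htlt : ∀ n, t (n + 1) < t n := by
    intro n
    have h := min_le_left (t n / 2) (r (n + 1) / 2)
    rw [← htsucc n] at h
    linarith [htpos n]
  -- the special vectors τ
  set τ : ℕ → (Fin d → ℝ) := fun n _ => t n with hτdef
  have hτmem : ∀ n, τ n ∈ Set.Icc (0 : Fin d → ℝ) 1 := by
    intro n
    rw [Set.mem_Icc]
    exact ⟨fun i => (htpos n).le, fun i => htle1 n⟩
  have hnormτ : ∀ n, ‖τ n‖ ≤ t n := by
    intro n
    rw [pi_norm_le_iff_of_nonneg (htpos n).le]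
    intro i
    rw [Real.norm_eq_abs, abs_of_pos (htpos n)]
  -- choice of b
  have hbex : ∀ n, ∃ bb : ℝ≥0∞, (0 < bb ∧ bb ≠ ∞ ∧
      ∫⁻ ω, ENNReal.ofReal (Φ (|ζ (τ n) ω| / bb.toReal)) ∂P ≤ 1) ∧
      (n = 0 ∨ bb < β n) := by
    intro n
    match n with
    | 0 =>
      have h := hγfin (τ 0) (hτmem 0)
      obtain ⟨bb, hbb, _⟩ := sInf_lt_iff.mp h
      exact ⟨bb, hbb, Or.inl rfl⟩
    | Nat.succ m =>
      have hlt : γ (τ (m + 1)) < β (m + 1) := by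
        refine hrprop (m + 1) (τ (m + 1)) (hτmem (m + 1)) ?_
        calc ‖τ (m + 1)‖ ≤ t (m + 1) := hnormτ (m + 1)
          _ ≤ r (m + 1) / 2 := by
              have h2 := min_le_right (t m / 2) (r (m + 1) / 2)
              rw [← htsucc m] at h2
              exact h2
          _ < r (m + 1) := by linarith [hrpos (m + 1)]
      obtain ⟨bb, hbb, hbblt⟩ := sInf_lt_iff.mp hlt
      exact ⟨bb, hbb, Or.inr hbblt⟩
  choose b hbS hbalt using hbex
  have hb0 : ∀ n, 0 < b n := fun n => (hbS n).1
  have hbtop : ∀ n, b n ≠ ∞ := fun n => (hbS n).2.1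
  have hbint : ∀ n, ∫⁻ ω, ENNReal.ofReal (Φ (|ζ (τ n) ω| / (b n).toReal)) ∂P ≤ 1 :=
    fun n => (hbS n).2.2
  have hbR : ∀ n, 0 < (b n).toReal := fun n => ENNReal.toReal_pos (hb0 n).ne' (hbtop n)
  set c : ℕ → ℝ := fun n => (b n).toReal * M n with hcdef
  have hcpos : ∀ n, 0 < c n := fun n => mul_pos (hbR n) (hMpos n)
  have hcle : ∀ n, c (n + 1) ≤ (1 / 2) ^ (n + 1) := by
    intro n
    have hlt : b (n + 1) < β (n + 1) := (hbalt (n + 1)).resolve_left (Nat.succ_ne_zero n)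
    have h1 : (b (n + 1)).toReal ≤ (1 / 2) ^ (n + 1) / M (n + 1) := by
      have := ENNReal.toReal_mono ENNReal.ofReal_ne_top hlt.le
      rwa [ENNReal.toReal_ofReal (by positivity)] at this
    calc c (n + 1) = (b (n + 1)).toReal * M (n + 1) := rfl
      _ ≤ ((1 / 2) ^ (n + 1) / M (n + 1)) * M (n + 1) :=
        mul_le_mul_of_nonneg_right h1 (hMpos _).le
      _ = (1 / 2) ^ (n + 1) := div_mul_cancel₀ _ (hMpos _).ne' 
  have hcsum : Summable c := by
    rw [← summable_nat_add_iff 1]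
    refine Summable.of_nonneg_of_le (fun n => (hcpos _).le) (fun n => hcle n) ?_
    exact (summable_nat_add_iff 1).mpr (summable_geometric_of_lt_one (by norm_num) (by norm_num))
  -- the function g
  set term : ℕ → ℝ → ℝ := fun n x => c n * min 1 (max 0 (x / t (n + 1))) with htermdef
  have htermnn : ∀ n x, 0 ≤ term n x := fun n x =>
    mul_nonneg (hcpos n).le (le_min zero_le_one (le_max_left 0 _))
  have htermle : ∀ n x, term n x ≤ c n := fun n x => by
    have : min 1 (max 0 (x / t (n + 1))) ≤ 1 := min_le_left _ _
    calc term n x ≤ c n * 1 := mul_le_mul_of_nonneg_left this (hcpos n).le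
      _ = c n := mul_one _
  have hsumx : ∀ x, Summable fun n => term n x := fun x =>
    Summable.of_nonneg_of_le (fun n => htermnn n x) (fun n => htermle n x) hcsum
  set G : ℝ → ℝ := fun x => ∑' n, term n x with hGdef
  have htermcont : ∀ n, Continuous (term n) := by
    intro n
    exact continuous_const.mul (continuous_const.min (continuous_const.max
      (continuous_id.div_const _)))
  have hGcont : Continuous G := by
    refine continuous_tsum htermcont hcsum fun n x => ?_
    rw [Real.norm_eq_abs, abs_of_nonneg (htermnn n x)]
    exact htermle n x
  have hG0 : G 0 = 0 := by
    rw [hGdef]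
    convert tsum_zero with n
    simp [htermdef]
  set g : (Fin d → ℝ) → ℝ := fun δ => G ‖δ‖ with hgdef
  have hgcont : ContinuousOn g (Set.Icc (0 : Fin d → ℝ) 1) :=
    (hGcont.comp continuous_norm).continuousOn
  have hgnn : ∀ δ, 0 ≤ g δ := fun δ => tsum_nonneg fun n => htermnn n _
  have hgten : Filter.Tendsto g (nhdsWithin 0 (Set.Icc (0 : Fin d → ℝ) 1)) (nhds 0) := by
    have h1 : Filter.Tendsto g (nhds 0) (nhds (G ‖(0 : Fin d → ℝ)‖)) :=
      (hGcont.comp continuous_norm).tendsto 0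
    rw [norm_zero, hG0] at h1
    exact h1.mono_left nhdsWithin_le_nhds
  have hgc : ∀ n (δ : Fin d → ℝ), t (n + 1) ≤ ‖δ‖ → c n ≤ g δ := by
    intro n δ h
    have h1 : term n ‖δ‖ = c n := by
      have hy : (1 : ℝ) ≤ ‖δ‖ / t (n + 1) := (one_le_div (htpos (n + 1))).mpr h
      have h2 : (0 : ℝ) ⊔ (‖δ‖ / t (n + 1)) = ‖δ‖ / t (n + 1) :=
        max_eq_right (div_nonneg (norm_nonneg δ) (htpos (n + 1)).le)
      show c n * (1 ⊓ (0 ⊔ ‖δ‖ / t (n + 1))) = c n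
      rw [h2, min_eq_left hy, mul_one]
    calc c n = term n ‖δ‖ := h1.symm
      _ ≤ ∑' m, term m ‖δ‖ := Summable.le_tsum (hsumx _) n fun m _ => htermnn m _
  -- dense sequences in the admissible pair sets
  have hAne : ∀ n, (Apairs d (τ n)).Nonempty := fun n =>
    apairs_nonempty fun i => (htpos n).le
  let q : ∀ n : ℕ, ℕ → ↥(Apairs d (τ n)) := fun n =>
    @TopologicalSpace.denseSeq ↥(Apairs d (τ n)) _ _ ((hAne n).to_subtype)
  have hqd : ∀ n, DenseRange (q n) := fun n =>
    @TopologicalSpace.denseRange_denseSeq ↥(Apairs d (τ n)) _ _ ((hAne n).to_subtype)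
  -- the measurable majorants
  set ρ : ℕ → Ω' → ℝ≥0∞ := fun n ω =>
    ⨆ k, ENNReal.ofReal |boxDiff (fun x => ξ x ω) (q n k).val.1 (q n k).val.2| with hρdef
  have hρmeas : ∀ n, Measurable (ρ n) := by
    intro n
    exact Measurable.iSup fun k =>
      ((measurable_boxDiff hmeas _ _).abs).ennreal_ofReal
  set a : ℕ → Ω' → ℝ := fun n ω => (ρ n ω).toReal / c n with hadef
  have hameas : ∀ n, Measurable (a n) := fun n =>
    ((hρmeas n).ennreal_toReal).div_const _
  have hann : ∀ n ω, 0 ≤ a n ω := fun n ω =>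
    div_nonneg ENNReal.toReal_nonneg (hcpos n).le
  -- pointwise facts on the good event
  have hgood : ∀ ω, ContinuousOn (fun x => ξ x ω) (Set.Icc (0 : Fin d → ℝ) 1) → ∀ n,
      ρ n ω ≤ ENNReal.ofReal (ζ (τ n) ω) ∧ ζ (τ n) ω = (ρ n ω).toReal := by
    intro ω hω n
    have hbdd := bddAbove_rectSet hω (τ n)
    have hrect : ζ (τ n) ω = sSup ((fun p : (Fin d → ℝ) × (Fin d → ℝ) =>
        |boxDiff (fun x => ξ x ω) p.1 p.2|) '' Apairs d (τ n)) :=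
      rectMod_eq_sSup_image _ _
    have hub : ∀ k, |boxDiff (fun x => ξ x ω) (q n k).val.1 (q n k).val.2| ≤ ζ (τ n) ω := by
      intro k
      rw [hrect]
      exact le_csSup hbdd ⟨(q n k).val, (q n k).2, rfl⟩
    have h1 : ρ n ω ≤ ENNReal.ofReal (ζ (τ n) ω) :=
      iSup_le fun k => ENNReal.ofReal_le_ofReal (hub k)
    have hρtop : ρ n ω ≠ ∞ := ne_top_of_le_ne_top ENNReal.ofReal_ne_top h1
    refine ⟨h1, le_antisymm ?_ ?_⟩
    · -- ζ ≤ (ρ n ω).toReal via density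
      rw [hrect]
      refine csSup_le ((hAne n).image _) ?_
      rintro rr ⟨⟨x, y⟩, hp, rfl⟩
      have hcl : ∀ z : ↥(Apairs d (τ n)),
          |boxDiff (fun x => ξ x ω) z.val.1 z.val.2| ≤ (ρ n ω).toReal := by
        intro z
        have hC : IsClosed {w : ↥(Apairs d (τ n)) |
            |boxDiff (fun x => ξ x ω) w.val.1 w.val.2| ≤ (ρ n ω).toReal} :=
          isClosed_le (continuous_absBoxDiff_subtype hω (τ n)) continuous_const
        have hsub : Set.range (q n) ⊆ {w : ↥(Apairs d (τ n)) |
            |boxDiff (fun x => ξ x ω) w.val.1 w.val.2| ≤ (ρ n ω).toReal} := by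
          rintro w ⟨k, rfl⟩
          have h2 : ENNReal.ofReal |boxDiff (fun x => ξ x ω) (q n k).val.1 (q n k).val.2|
              ≤ ρ n ω := le_iSup (fun k => ENNReal.ofReal
                |boxDiff (fun x => ξ x ω) (q n k).val.1 (q n k).val.2|) k
          exact (ENNReal.ofReal_le_iff_le_toReal hρtop).mp h2
        have h3 : z ∈ closure (Set.range (q n)) := hqd n z
        exact (closure_mono hsub).trans (le_of_eq hC.closure_eq) h3
      exact hcl ⟨(x, y), hp⟩
    · -- (ρ n ω).toReal ≤ ζ
      have h4 : ζ (τ n) ω = (ENNReal.ofReal (ζ (τ n) ω)).toReal := by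
        rw [ENNReal.toReal_ofReal]
        exact rectMod_nonneg_of_cont hω fun i => (htpos n).le
      rw [h4]
      exact ENNReal.toReal_mono ENNReal.ofReal_ne_top h1
  -- per-level modular estimate
  have hmod : ∀ n, ∫⁻ ω, ENNReal.ofReal (Ψ (a n ω)) ∂P ≤
      ENNReal.ofReal ((1 / 2) ^ (n + 2)) := by
    intro n
    have hpt : ∀ ω, ENNReal.ofReal (Ψ (a n ω)) ≤ ENNReal.ofReal (ε n) *
        (1 + ENNReal.ofReal (Φ ((ρ n ω).toReal / (b n).toReal))) := by
      intro ω
      have h1 : Ψ ((ρ n ω).toReal / ((b n).toReal * M n)) ≤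
          ε n * (1 + Φ ((ρ n ω).toReal / (b n).toReal)) :=
        orlicz_key hΨ hΦ (hεpos n).le (hspos n) (hu1 n) (hsΨ n) (hular n)
          (hM1 n) (hMus n) (hbR n) ENNReal.toReal_nonneg
      have h2 : a n ω = (ρ n ω).toReal / ((b n).toReal * M n) := rfl
      rw [h2]
      calc ENNReal.ofReal (Ψ ((ρ n ω).toReal / ((b n).toReal * M n)))
          ≤ ENNReal.ofReal (ε n * (1 + Φ ((ρ n ω).toReal / (b n).toReal))) :=
            ENNReal.ofReal_le_ofReal h1
        _ = ENNReal.ofReal (ε n) *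
            (1 + ENNReal.ofReal (Φ ((ρ n ω).toReal / (b n).toReal))) := by
            rw [ENNReal.ofReal_mul (hεpos n).le,
              ENNReal.ofReal_add zero_le_one (hΦ.nonneg _), ENNReal.ofReal_one]
    have htrans : ∫⁻ ω, ENNReal.ofReal (Φ ((ρ n ω).toReal / (b n).toReal)) ∂P ≤ 1 := by
      have heq : ∫⁻ ω, ENNReal.ofReal (Φ ((ρ n ω).toReal / (b n).toReal)) ∂P =
          ∫⁻ ω, ENNReal.ofReal (Φ (|ζ (τ n) ω| / (b n).toReal)) ∂P := by
        refine lintegral_congr_ae ?_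
        filter_upwards [hcont] with ω hω
        have hfacts := hgood ω hω n
        have hz0 : 0 ≤ ζ (τ n) ω := rectMod_nonneg_of_cont hω fun i => (htpos n).le
        rw [← hfacts.2, abs_of_nonneg hz0]
      rw [heq]
      exact hbint n
    calc ∫⁻ ω, ENNReal.ofReal (Ψ (a n ω)) ∂P
        ≤ ∫⁻ ω, ENNReal.ofReal (ε n) *
          (1 + ENNReal.ofReal (Φ ((ρ n ω).toReal / (b n).toReal))) ∂P :=
          lintegral_mono hpt
      _ = ENNReal.ofReal (ε n) *
          ∫⁻ ω, (1 + ENNReal.ofReal (Φ ((ρ n ω).toReal / (b n).toReal))) ∂P :=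
          lintegral_const_mul' _ _ ENNReal.ofReal_ne_top
      _ ≤ ENNReal.ofReal (ε n) * (1 + 1) := by
          refine mul_le_mul_right ?_ _
          rw [lintegral_add_left measurable_const]
          rw [lintegral_const, measure_univ, mul_one]
          exact add_le_add_right htrans 1
      _ = ENNReal.ofReal ((1 / 2) ^ (n + 2)) := by
          have h3 : ENNReal.ofReal (ε n) * (1 + 1) =
              ENNReal.ofReal (ε n + ε n) := by
            rw [ENNReal.ofReal_add (hεpos n).le (hεpos n).le]
            ring
          rw [h3]
          congr 1
          show (1 / 2 : ℝ) ^ (n + 3) + (1 / 2) ^ (n + 3) = (1 / 2) ^ (n + 2)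
          rw [pow_succ]
          ring
  -- the supremum W of the Ψ-values
  set W : Ω' → ℝ≥0∞ := fun ω => ⨆ n, ENNReal.ofReal (Ψ (a n ω)) with hWdef
  have hWmeas : Measurable W :=
    Measurable.iSup fun n => ((hΨ.continuous.measurable).comp (hameas n)).ennreal_ofReal
  have hWint : ∫⁻ ω, W ω ∂P ≤ ENNReal.ofReal (1 / 2) := by
    have h1 : ∀ ω, W ω ≤ ∑' n, ENNReal.ofReal (Ψ (a n ω)) :=
      fun ω => iSup_le fun n => ENNReal.le_tsum n
    calc ∫⁻ ω, W ω ∂P ≤ ∫⁻ ω, ∑' n, ENNReal.ofReal (Ψ (a n ω)) ∂P := lintegral_mono h1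
      _ = ∑' n, ∫⁻ ω, ENNReal.ofReal (Ψ (a n ω)) ∂P :=
          lintegral_tsum fun n =>
            (((hΨ.continuous.measurable).comp (hameas n)).ennreal_ofReal).aemeasurable
      _ ≤ ∑' n, ENNReal.ofReal ((1 / 2 : ℝ) ^ (n + 2)) := ENNReal.tsum_le_tsum hmod
      _ = ENNReal.ofReal (1 / 2) := by
          have h2 : ∀ n : ℕ, ENNReal.ofReal ((1 / 2 : ℝ) ^ (n + 2)) =
              ENNReal.ofReal ((1 / 2 : ℝ) ^ 2) * ENNReal.ofReal (1 / 2) ^ n := by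
            intro n
            rw [← ENNReal.ofReal_pow (by norm_num), ← ENNReal.ofReal_mul (by positivity)]
            congr 1
            rw [← pow_add]
            ring
          rw [tsum_congr h2, ENNReal.tsum_mul_left, ENNReal.tsum_geometric]
          have h3 : (1 : ℝ≥0∞) - ENNReal.ofReal (1 / 2) = ENNReal.ofReal (1 / 2) := by
            rw [← ENNReal.ofReal_one, ← ENNReal.ofReal_sub _ (by norm_num)]
            norm_num
          rw [h3, ← ENNReal.ofReal_inv_of_pos (by norm_num)]
          rw [← ENNReal.ofReal_mul (by positivity)]
          norm_num
  have hWae : ∀ᵐ ω ∂P, W ω < ∞ :=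
    ae_lt_top hWmeas (lt_of_le_of_lt hWint ENNReal.ofReal_lt_top).ne
  -- the factor random variable
  set νh : Ω' → ℝ≥0∞ := fun ω => ⨆ n, ENNReal.ofReal (a n ω) with hνhdef
  have hνhmeas : Measurable νh := Measurable.iSup fun n => (hameas n).ennreal_ofReal
  set ν0 : Ω' → ℝ := fun ω => (νh ω).toReal with hν0def
  have hν0meas : Measurable ν0 := hνhmeas.ennreal_toReal
  have hν0nn : ∀ ω, 0 ≤ ν0 ω := fun ω => ENNReal.toReal_nonneg
  -- key pointwise claim on {W < ∞}
  have hclaim : ∀ ω, W ω < ∞ →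
      (ENNReal.ofReal (Ψ (ν0 ω)) ≤ W ω ∧ ∀ n, a n ω ≤ ν0 ω) := by
    intro ω hWω
    have hWr : ∀ n, Ψ (a n ω) ≤ (W ω).toReal := by
      intro n
      have h1 : ENNReal.ofReal (Ψ (a n ω)) ≤ W ω :=
        le_iSup (fun m => ENNReal.ofReal (Ψ (a m ω))) n
      exact (ENNReal.ofReal_le_iff_le_toReal hWω.ne).mp h1
    obtain ⟨K0, hK0⟩ : ∃ K0, ∀ v ≥ K0, Ψ v > (W ω).toReal := by
      have := hΨ.tendsto_atTop.eventually_gt_atTop ((W ω).toReal)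
      rw [eventually_atTop] at this
      exact this
    have haK : ∀ n, a n ω ≤ K0 := by
      intro n
      by_contra hgt
      push_neg at hgt
      exact absurd (hWr n) (not_le.mpr (hK0 _ hgt.le))
    have hνhle : νh ω ≤ ENNReal.ofReal K0 :=
      iSup_le fun n => ENNReal.ofReal_le_ofReal (haK n)
    have hνhtop : νh ω ≠ ∞ := ne_top_of_le_ne_top ENNReal.ofReal_ne_top hνhle
    have haν0 : ∀ n, a n ω ≤ ν0 ω := by
      intro n
      have h1 : ENNReal.ofReal (a n ω) ≤ νh ω :=
        le_iSup (fun m => ENNReal.ofReal (a m ω)) n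
      exact (ENNReal.ofReal_le_iff_le_toReal hνhtop).mp h1
    refine ⟨?_, haν0⟩
    rcases eq_or_lt_of_le (hν0nn ω) with h0 | h0
    · rw [← h0, hΨ.map_zero]
      simp
    · -- 0 < ν0 ω
      have hseq : ∀ j : ℕ, Ψ (max (ν0 ω - 1 / (j + 1)) 0) ≤ (W ω).toReal := by
        intro j
        have hblt : max (ν0 ω - 1 / (j + 1)) 0 < ν0 ω := by
          apply max_lt _ h0
          have : (0 : ℝ) < 1 / (j + 1) := by positivity
          linarith
        have hofr : ENNReal.ofReal (max (ν0 ω - 1 / (j + 1)) 0) < νh ω := by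
          have : ENNReal.ofReal (max (ν0 ω - 1 / (j + 1)) 0) <
              ENNReal.ofReal (ν0 ω) := (ENNReal.ofReal_lt_ofReal_iff h0).mpr hblt
          rwa [hν0def, ENNReal.ofReal_toReal hνhtop] at this
        rw [hνhdef, lt_iSup_iff] at hofr
        obtain ⟨n, hn⟩ := hofr
        have hlt2 : max (ν0 ω - 1 / (j + 1)) 0 < a n ω :=
          (ENNReal.ofReal_lt_ofReal_iff_of_nonneg (le_max_right _ _)).mp hn
        calc Ψ (max (ν0 ω - 1 / (j + 1)) 0) ≤ Ψ (a n ω) :=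
          orlicz_monotoneOn hΨ (Set.mem_Ici.mpr (le_max_right _ _)) (hann n ω) hlt2.le
          _ ≤ (W ω).toReal := hWr n
      have htend : Filter.Tendsto (fun j : ℕ => Ψ (max (ν0 ω - 1 / (j + 1)) 0))
          Filter.atTop (nhds (Ψ (ν0 ω))) := by
        have h1 : Filter.Tendsto (fun j : ℕ => ν0 ω - 1 / (j + 1))
            Filter.atTop (nhds (ν0 ω)) := by
          have := tendsto_one_div_add_atTop_nhds_zero_nat (𝕜 := ℝ)
          have h2 := tendsto_const_nhds (x := ν0 ω) (f := Filter.atTop (α := ℕ))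
          have h3 := h2.sub this
          simpa using h3
        have h4 : Filter.Tendsto (fun j : ℕ => max (ν0 ω - 1 / (j + 1)) 0)
            Filter.atTop (nhds (max (ν0 ω) 0)) := h1.max tendsto_const_nhds
        rw [max_eq_left (hν0nn ω)] at h4
        exact (hΨ.continuous.tendsto _).comp h4
      have hΨle : Ψ (ν0 ω) ≤ (W ω).toReal :=
        le_of_tendsto htend (Filter.Eventually.of_forall hseq)
      calc ENNReal.ofReal (Ψ (ν0 ω)) ≤ ENNReal.ofReal ((W ω).toReal) :=
          ENNReal.ofReal_le_ofReal hΨle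
        _ = W ω := ENNReal.ofReal_toReal hWω.ne
  -- ν1 and its modular bound
  set ν1 : Ω' → ℝ := fun ω => max (ν0 ω) κ with hν1def
  have hν1meas : Measurable ν1 := hν0meas.max measurable_const
  have hν1κ : ∀ ω, κ ≤ ν1 ω := fun ω => le_max_right _ _
  have hν1nn : ∀ ω, 0 ≤ ν1 ω := fun ω => hκpos.le.trans (hν1κ ω)
  have hν1ν0 : ∀ ω, ν0 ω ≤ ν1 ω := fun ω => le_max_left _ _
  have hν1mod : ∫⁻ ω, ENNReal.ofReal (Ψ (ν1 ω)) ∂P ≤ 1 := by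
    have hpt : ∀ᵐ ω ∂P, ENNReal.ofReal (Ψ (ν1 ω)) ≤ W ω + ENNReal.ofReal (Ψ κ) := by
      filter_upwards [hWae] with ω hWω
      have h1 : Ψ (ν1 ω) = max (Ψ (ν0 ω)) (Ψ κ) :=
        (orlicz_monotoneOn hΨ).map_max (hν0nn ω) hκpos.le
      rw [h1]
      rcases max_cases (Ψ (ν0 ω)) (Ψ κ) with ⟨heq, _⟩ | ⟨heq, _⟩ <;> rw [heq]
      · exact le_add_right (hclaim ω hWω).1
      · exact le_add_left (le_refl _)
    calc ∫⁻ ω, ENNReal.ofReal (Ψ (ν1 ω)) ∂P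
        ≤ ∫⁻ ω, (W ω + ENNReal.ofReal (Ψ κ)) ∂P := lintegral_mono_ae hpt
      _ = (∫⁻ ω, W ω ∂P) + ENNReal.ofReal (Ψ κ) := by
          rw [lintegral_add_right _ measurable_const, lintegral_const,
            measure_univ, mul_one]
      _ ≤ ENNReal.ofReal (1 / 2) + ENNReal.ofReal (1 / 2) :=
          add_le_add hWint (ENNReal.ofReal_le_ofReal hκhalf)
      _ = 1 := by
          rw [← ENNReal.ofReal_add (by norm_num) (by norm_num)]
          norm_num
  -- the Luxemburg norm of ν1
  set L : ℝ≥0∞ := luxNorm P Ψ ν1 with hLdef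
  have hL1 : L ≤ 1 := by
    refine sInf_le ⟨zero_lt_one, ENNReal.one_ne_top, ?_⟩
    have h1 : ∀ ω, ENNReal.ofReal (Ψ (|ν1 ω| / (1 : ℝ≥0∞).toReal)) =
        ENNReal.ofReal (Ψ (ν1 ω)) := by
      intro ω
      rw [ENNReal.toReal_one, div_one, abs_of_nonneg (hν1nn ω)]
    rw [lintegral_congr fun ω => h1 ω]
    exact hν1mod
  have hLlb : ENNReal.ofReal (κ / A0) ≤ L := by
    refine le_sInf ?_
    rintro cc ⟨hcc0, hcctop, hccint⟩
    have hccR : 0 < cc.toReal := ENNReal.toReal_pos hcc0.ne' hcctop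
    have h1 : ENNReal.ofReal (Ψ (κ / cc.toReal)) ≤ 1 := by
      have h2 : ∀ ω, ENNReal.ofReal (Ψ (κ / cc.toReal)) ≤
          ENNReal.ofReal (Ψ (|ν1 ω| / cc.toReal)) := by
        intro ω
        refine ENNReal.ofReal_le_ofReal ?_
        refine orlicz_monotoneOn hΨ (div_nonneg hκpos.le hccR.le)
          (div_nonneg (abs_nonneg _) hccR.le) ?_
        rw [abs_of_nonneg (hν1nn ω)]
        gcongr
        exact hν1κ ω
      calc ENNReal.ofReal (Ψ (κ / cc.toReal))
          = ∫⁻ _, ENNReal.ofReal (Ψ (κ / cc.toReal)) ∂P := by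
            rw [lintegral_const, measure_univ, mul_one]
        _ ≤ ∫⁻ ω, ENNReal.ofReal (Ψ (|ν1 ω| / cc.toReal)) ∂P := lintegral_mono h2
        _ ≤ 1 := hccint
    have h3 : Ψ (κ / cc.toReal) ≤ 1 := ENNReal.ofReal_le_one.mp h1
    have h4 : κ / cc.toReal ≤ A0 := by
      by_contra hgt
      push_neg at hgt
      have h5 := hΨ.strictMonoOn (Set.mem_Ici.mpr hA0pos.le)
        (Set.mem_Ici.mpr (hA0pos.le.trans hgt.le)) hgt
      linarith
    have h6 : κ / A0 ≤ cc.toReal := by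
      rw [div_le_iff₀ hA0pos]
      rw [div_le_iff₀ hccR] at h4
      linarith [mul_comm A0 cc.toReal]
    exact (ENNReal.ofReal_le_iff_le_toReal hcctop).mpr h6
  have hLpos : 0 < L :=
    lt_of_lt_of_le (ENNReal.ofReal_pos.mpr (div_pos hκpos hA0pos)) hLlb
  have hLtop : L ≠ ∞ := (lt_of_le_of_lt hL1 ENNReal.one_lt_top).ne
  have hLR : 0 < L.toReal := ENNReal.toReal_pos hLpos.ne' hLtop
  -- the normalized ν
  set ν : Ω' → ℝ := fun ω => L.toReal⁻¹ * ν1 ω with hνdef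
  have hνmeas : Measurable ν := measurable_const.mul hν1meas
  have hνnn : ∀ ω, 0 ≤ ν ω := fun ω => mul_nonneg (by positivity) (hν1nn ω)
  have hνnorm : luxNorm P Ψ ν = 1 := by
    rw [hνdef, luxNorm_const_mul P Ψ ν1 (inv_pos.mpr hLR),
      ENNReal.ofReal_inv_of_pos hLR, ENNReal.ofReal_toReal hLtop, ← hLdef]
    exact ENNReal.inv_mul_cancel hLpos.ne' hLtop
  have hν1ν : ∀ ω, ν1 ω ≤ ν ω := by
    intro ω
    have h1 : L.toReal ≤ 1 := by
      have := ENNReal.toReal_mono ENNReal.one_ne_top hL1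
      simpa using this
    have h2 : (1 : ℝ) ≤ L.toReal⁻¹ := (one_le_inv₀ hLR).mpr h1
    calc ν1 ω = 1 * ν1 ω := (one_mul _).symm
      _ ≤ L.toReal⁻¹ * ν1 ω := mul_le_mul_of_nonneg_right h2 (hν1nn ω)
  -- the almost-sure domination
  have hae : ∀ᵐ ω ∂P, ∀ δ ∈ Set.Icc (0 : Fin d → ℝ) 1,
      rectMod (fun x => ξ x ω) δ ≤ ν ω * g δ := by
    filter_upwards [hcont, hWae] with ω hωc hωW
    intro δ hδ
    rw [Set.mem_Icc] at hδ
    have hδnn : ∀ i, 0 ≤ δ i := fun i => hδ.1 i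
    have hδle1 : ∀ i, δ i ≤ 1 := fun i => hδ.2 i
    have hnorm1 : ‖δ‖ ≤ 1 := by
      rw [pi_norm_le_iff_of_nonneg zero_le_one]
      intro i
      rw [Real.norm_eq_abs, abs_of_nonneg (hδnn i)]
      exact hδle1 i
    -- the chain at level n
    have haux : ∀ n, ζ (τ n) ω ≤ c n * ν ω := by
      intro n
      have h1 : ζ (τ n) ω = c n * a n ω := by
        rw [(hgood ω hωc n).2]
        have h2 : a n ω = (ρ n ω).toReal / c n := rfl
        rw [h2, mul_div_cancel₀ _ (hcpos n).ne']
      rw [h1]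
      refine mul_le_mul_of_nonneg_left ?_ (hcpos n).le
      calc a n ω ≤ ν0 ω := (hclaim ω hωW).2 n
        _ ≤ ν1 ω := hν1ν0 ω
        _ ≤ ν ω := hν1ν ω
    have hmono : ∀ n, ‖δ‖ ≤ t n → rectMod (fun x => ξ x ω) δ ≤ ζ (τ n) ω := by
      intro n hle
      refine rectMod_mono_of_cont hωc hδnn fun i => ?_
      calc δ i ≤ |δ i| := le_abs_self _
        _ = ‖δ i‖ := (Real.norm_eq_abs _).symm
        _ ≤ ‖δ‖ := norm_le_pi_norm δ i
        _ ≤ t n := hle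
    rcases eq_or_lt_of_le (norm_nonneg δ) with h0 | h0
    · -- ‖δ‖ = 0
      have hg0 : g δ = 0 := by
        have : g δ = G ‖δ‖ := rfl
        rw [this, ← h0, hG0]
      rw [hg0, mul_zero]
      have hub : ∀ m : ℕ, rectMod (fun x => ξ x ω) δ ≤ c (m + 1) * ν ω := by
        intro m
        refine (hmono (m + 1) ?_).trans (haux (m + 1))
        rw [← h0]
        exact (htpos (m + 1)).le
      have h5 : Filter.Tendsto (fun m : ℕ => c (m + 1)) Filter.atTop (nhds 0) := by
        refine squeeze_zero (fun m => (hcpos _).le) (fun m => hcle m) ?_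
        exact (tendsto_pow_atTop_nhds_zero_of_lt_one (by norm_num) (by norm_num)).comp
          (tendsto_add_atTop_nat 1)
      have h6 : Filter.Tendsto (fun m : ℕ => c (m + 1) * ν ω) Filter.atTop (nhds 0) := by
        have := h5.mul_const (ν ω)
        simpa using this
      exact ge_of_tendsto h6 (Filter.Eventually.of_forall hub)
    · -- 0 < ‖δ‖
      have hex : ∃ m, t m < ‖δ‖ := by
        obtain ⟨m, hm⟩ := exists_pow_lt_of_lt_one h0 (by norm_num : (1 / 2 : ℝ) < 1)
        exact ⟨m, lt_of_le_of_lt (htle m) hm⟩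
      have hspec : t (Nat.find hex) < ‖δ‖ := Nat.find_spec hex
      have hn'0 : Nat.find hex ≠ 0 := by
        intro hzero
        rw [hzero, ht0] at hspec
        linarith
      obtain ⟨n, hn⟩ : ∃ n, Nat.find hex = n + 1 :=
        ⟨Nat.find hex - 1, (Nat.succ_pred_eq_of_ne_zero hn'0).symm⟩
      have hmin : ‖δ‖ ≤ t n := by
        have := Nat.find_min hex (by omega : n < Nat.find hex)
        linarith [not_lt.mp this]
      rw [hn] at hspec
      calc rectMod (fun x => ξ x ω) δ ≤ ζ (τ n) ω := hmono n hmin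
        _ ≤ c n * ν ω := haux n
        _ ≤ g δ * ν ω := mul_le_mul_of_nonneg_right (hgc n δ hspec.le) (hνnn ω)
        _ = ν ω * g δ := mul_comm _ _
  exact ⟨ν, g, hνmeas, hνnn, hνnorm, hgcont, fun δ _ => hgnn δ, hgten, hae⟩
end
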